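/- arXiv:1610.06270 — 7 statements merged into one kernel-verified Lean document; each statement's English description precedes it below -/
import Mathlib

section
/- For every real α > 2, every real t > 0, and every integer N ≥ 1, ∫_0^∞ (1 − (1 + t r^(−α))^(−N)) r dr = (t^(2/α)/2) · Γ(N + 2/α) · Γ(1 − 2/α) / Γ(N), where Γ is the real Gamma function; that is, the integral equals C_{α,N+1} t^(2/α)/(2π) with C_{α,N+1} := π Γ(N + 2/α) Γ(1 − 2/α)/Γ(N). -/
open MeasureTheory Real
open Set

lemma beta01 (a b : ℝ) (ha : 0 < a) (hb : 0 < b) :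
    ∫ x in (0:ℝ)..1, x ^ (a-1) * (1-x) ^ (b-1) = Gamma a * Gamma b / Gamma (a+b) := by
  have hab : (0:ℝ) < a + b := by linarith
  have h := Complex.Gamma_mul_Gamma_eq_betaIntegral (s := (a:ℂ)) (t := (b:ℂ))
    (by simpa using ha) (by simpa using hb)
  have hbeta : Complex.betaIntegral (a:ℂ) (b:ℂ)
      = ((∫ x in (0:ℝ)..1, x ^ (a-1) * (1-x) ^ (b-1) : ℝ) : ℂ) := by
    rw [Complex.betaIntegral, ← intervalIntegral.integral_ofReal]
    refine intervalIntegral.integral_congr fun x hx => ?_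
    rw [Set.uIcc_of_le zero_le_one] at hx
    obtain ⟨hx0, hx1⟩ := hx
    push_cast
    rw [Complex.ofReal_cpow hx0, Complex.ofReal_cpow (by linarith : (0:ℝ) ≤ 1 - x)]
    push_cast
    ring
  rw [hbeta, ← Complex.ofReal_add, Complex.Gamma_ofReal, Complex.Gamma_ofReal,
    Complex.Gamma_ofReal, ← Complex.ofReal_mul, ← Complex.ofReal_mul] at h
  have h' : Gamma a * Gamma b
      = Gamma (a+b) * ∫ x in (0:ℝ)..1, x ^ (a-1) * (1-x) ^ (b-1) :=
    Complex.ofReal_injective h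
  have hG : Gamma (a+b) ≠ 0 := (Real.Gamma_pos_of_pos hab).ne'
  field_simp [h']
  rw [h']; ring

lemma betaIoi (a b : ℝ) (ha : 0 < a) (hb : 0 < b) :
    ∫ x in Ioi (0:ℝ), x ^ (a-1) * (1+x) ^ (-(a+b)) = Gamma a * Gamma b / Gamma (a+b) := by
  have himg : (fun y : ℝ => y / (1 - y)) '' Ioo 0 1 = Ioi (0:ℝ) := by
    ext x
    constructor
    · rintro ⟨y, ⟨hy0, hy1⟩, rfl⟩
      exact div_pos hy0 (by linarith)
    · intro hx
      rw [mem_Ioi] at hx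
      refine ⟨x / (1 + x), ⟨div_pos hx (by linarith), ?_⟩, ?_⟩
      · rw [div_lt_one (by linarith)]; linarith
      · have h1 : (1:ℝ) + x ≠ 0 := by positivity
        field_simp
        ring
  have hderiv : ∀ y ∈ Ioo (0:ℝ) 1,
      HasDerivWithinAt (fun y : ℝ => y / (1 - y)) (((1-y)^2)⁻¹) (Ioo 0 1) y := by
    intro y hy
    have h1y : (0:ℝ) < 1 - y := by linarith [hy.2]
    have := (hasDerivAt_id y).div ((hasDerivAt_id y).const_sub 1) h1y.ne'
    simp only [id_eq] at this
    convert this.hasDerivWithinAt using 1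
    · rfl
    · rfl
    · rfl
    · rw [inv_eq_one_div]; congr 1; ring
  have hinj : InjOn (fun y : ℝ => y / (1 - y)) (Ioo 0 1) := by
    intro y1 h1 y2 h2 heq
    have e1 : (0:ℝ) < 1 - y1 := by linarith [h1.2]
    have e2 : (0:ℝ) < 1 - y2 := by linarith [h2.2]
    rw [div_eq_div_iff e1.ne' e2.ne'] at heq
    nlinarith
  have key := integral_image_eq_integral_abs_deriv_smul measurableSet_Ioo hderiv hinj
      (fun x => x ^ (a-1) * (1+x) ^ (-(a+b)))
  rw [himg] at key
  rw [key]
  have congr1 : ∀ y ∈ Ioo (0:ℝ) 1,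
      |((1-y)^2)⁻¹| • ((y/(1-y)) ^ (a-1) * (1+y/(1-y)) ^ (-(a+b)))
        = y ^ (a-1) * (1-y) ^ (b-1) := by
    intro y hy
    have hy0 : (0:ℝ) < y := hy.1
    have h1y : (0:ℝ) < 1 - y := by linarith [hy.2]
    have e1 : (1:ℝ) + y/(1-y) = (1-y)⁻¹ := by field_simp; ring
    rw [e1, smul_eq_mul, abs_of_pos (by positivity), Real.div_rpow hy0.le h1y.le,
      Real.inv_rpow h1y.le, ← Real.rpow_neg h1y.le, neg_neg]
    rw [div_eq_mul_inv, ← Real.rpow_neg h1y.le, ← Real.rpow_natCast (1-y) 2,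
      ← Real.rpow_neg h1y.le]
    rw [show ((1-y)^(-((2:ℕ):ℝ)) * (y ^ (a-1) * (1-y)^(-(a-1)) * (1-y)^(a+b)))
        = y ^ (a-1) * ((1-y)^(-((2:ℕ):ℝ)) * (1-y)^(-(a-1)) * (1-y)^(a+b)) from by ring]
    rw [← Real.rpow_add h1y, ← Real.rpow_add h1y]
    norm_num
    left
    congr 1
    ring
  rw [setIntegral_congr_fun measurableSet_Ioo congr1, ← integral_Ioc_eq_integral_Ioo,
    ← intervalIntegral.integral_of_le zero_le_one, beta01 a b ha hb]

lemma int_pow_beta (p q : ℝ) (hp : -1 < p) (hq : q ≤ 0) (hpq : p + q < -1) :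
    IntegrableOn (fun u : ℝ => u ^ p * (1 + u) ^ q) (Ioi (0:ℝ)) := by
  have hmeas : ∀ s : Set ℝ, s ⊆ Ioi 0 → MeasurableSet s →
      AEStronglyMeasurable (fun u : ℝ => u ^ p * (1 + u) ^ q) (volume.restrict s) := by
    intro s hs hsm
    apply ContinuousOn.aestronglyMeasurable _ hsm
    intro u hu
    have hu0 : (0:ℝ) < u := hs hu
    exact ((Real.continuousAt_rpow_const u p (Or.inl hu0.ne')).continuousWithinAt.mul
      (((continuous_const.add continuous_id).continuousWithinAt).rpow_const
        (Or.inl (ne_of_gt (by show (0:ℝ) < 1 + u; linarith)))))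
  have h1 : IntegrableOn (fun u : ℝ => u ^ p * (1 + u) ^ q) (Ioc (0:ℝ) 1) := by
    have hb : IntegrableOn (fun u : ℝ => u ^ p) (Ioc (0:ℝ) 1) := by
      have := intervalIntegral.intervalIntegrable_rpow' (a := 0) (b := 1) hp
      rwa [intervalIntegrable_iff_integrableOn_Ioc_of_le zero_le_one] at this
    refine Integrable.mono hb (hmeas _ (Ioc_subset_Ioi_self) measurableSet_Ioc) ?_
    filter_upwards [ae_restrict_mem measurableSet_Ioc] with u hu
    have hu0 : (0:ℝ) < u := hu.1
    rw [norm_mul, norm_of_nonneg (by positivity), norm_of_nonneg (by positivity)]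
    have : (1+u) ^ q ≤ 1 := Real.rpow_le_one_of_one_le_of_nonpos (by linarith) hq
    nlinarith [Real.rpow_pos_of_pos hu0 p, Real.rpow_nonneg (by positivity : (0:ℝ) ≤ 1+u) q]
  have h2 : IntegrableOn (fun u : ℝ => u ^ p * (1 + u) ^ q) (Ioi (1:ℝ)) := by
    have hb : IntegrableOn (fun u : ℝ => u ^ (p+q)) (Ioi (1:ℝ)) :=
      integrableOn_Ioi_rpow_of_lt hpq one_pos
    refine Integrable.mono hb (hmeas _ (fun u hu => show (0:ℝ) < u from lt_trans one_pos hu) measurableSet_Ioi) ?_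
    filter_upwards [ae_restrict_mem measurableSet_Ioi] with u hu
    have hu1 : (1:ℝ) < u := hu
    have hu0 : (0:ℝ) < u := lt_trans one_pos hu1
    rw [norm_mul, norm_of_nonneg (by positivity), norm_of_nonneg (by positivity),
      norm_of_nonneg (by positivity), Real.rpow_add hu0]
    have : (1+u) ^ q ≤ u ^ q := Real.rpow_le_rpow_of_nonpos hu0 (by linarith) hq
    nlinarith [Real.rpow_pos_of_pos hu0 p]
  have : IntegrableOn (fun u : ℝ => u ^ p * (1 + u) ^ q) (Ioc 0 1 ∪ Ioi 1) := h1.union h2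
  rwa [Ioc_union_Ioi_eq_Ioi zero_le_one] at this

lemma one_sub_pow_le_aux (w : ℝ) (h0 : 0 ≤ w) (h1 : w ≤ 1) (n : ℕ) :
    1 - w ^ n ≤ n * (1 - w) := by
  induction n with
  | zero => simp
  | succ n ih =>
      have h2 : w ^ (n+1) = w ^ n * w := pow_succ w n
      have h3 : w ^ n ≤ 1 := pow_le_one₀ h0 h1
      have h4 : 0 ≤ w ^ n := pow_nonneg h0 n
      push_cast
      nlinarith

lemma one_sub_rpow_le (u : ℝ) (hu : 0 ≤ u) (n : ℕ) :
    1 - (1 + u) ^ (-(n:ℝ)) ≤ n * u := by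
  have h1u : (0:ℝ) < 1 + u := by linarith
  have hw : (1 + u)⁻¹ ≤ 1 := by
    rw [inv_le_one_iff₀]; right; linarith
  have hw0 : (0:ℝ) ≤ (1+u)⁻¹ := by positivity
  have key := one_sub_pow_le_aux ((1+u)⁻¹) hw0 hw n
  rw [Real.rpow_neg h1u.le, Real.rpow_natCast]
  calc 1 - ((1+u)^n)⁻¹ = 1 - ((1+u)⁻¹)^n := by rw [inv_pow]
    _ ≤ n * (1 - (1+u)⁻¹) := key
    _ ≤ n * u := by
        have : 1 - (1+u)⁻¹ ≤ u := by
          nlinarith [mul_inv_cancel₀ h1u.ne', hw0]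
        nlinarith [Nat.cast_nonneg (α := ℝ) n]

lemma int_J (d : ℝ) (hd0 : 0 < d) (hd1 : d < 1) (n : ℕ) :
    IntegrableOn (fun u : ℝ => (1 - (1 + u) ^ (-(n:ℝ))) * u ^ (-d-1)) (Ioi (0:ℝ)) := by
  have hmeas : ∀ s : Set ℝ, s ⊆ Ioi 0 → MeasurableSet s →
      AEStronglyMeasurable (fun u : ℝ => (1 - (1 + u) ^ (-(n:ℝ))) * u ^ (-d-1))
        (volume.restrict s) := by
    intro s hs hsm
    apply ContinuousOn.aestronglyMeasurable _ hsm
    intro u hu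
    have hu0 : (0:ℝ) < u := hs hu
    exact ((continuousWithinAt_const.sub
      (((continuous_const.add continuous_id).continuousWithinAt).rpow_const
        (Or.inl (ne_of_gt (by show (0:ℝ) < 1 + u; linarith))))).mul
      (Real.continuousAt_rpow_const u (-d-1) (Or.inl hu0.ne')).continuousWithinAt)
  have hnonneg : ∀ u : ℝ, 0 < u → 0 ≤ 1 - (1 + u) ^ (-(n:ℝ)) := by
    intro u hu
    have : (1+u) ^ (-(n:ℝ)) ≤ 1 :=
      Real.rpow_le_one_of_one_le_of_nonpos (by linarith) (neg_nonpos.mpr (Nat.cast_nonneg n))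
    linarith
  have h1 : IntegrableOn (fun u : ℝ => (1 - (1 + u) ^ (-(n:ℝ))) * u ^ (-d-1)) (Ioc (0:ℝ) 1) := by
    have hb : IntegrableOn (fun u : ℝ => (n:ℝ) * u ^ (-d)) (Ioc (0:ℝ) 1) := by
      have := intervalIntegral.intervalIntegrable_rpow' (a := 0) (b := 1) (r := -d) (by linarith)
      rw [intervalIntegrable_iff_integrableOn_Ioc_of_le zero_le_one] at this
      exact this.const_mul _
    refine Integrable.mono hb (hmeas _ (Ioc_subset_Ioi_self) measurableSet_Ioc) ?_
    filter_upwards [ae_restrict_mem measurableSet_Ioc] with u hu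
    have hu0 : (0:ℝ) < u := hu.1
    rw [norm_mul, norm_of_nonneg (hnonneg u hu0), norm_of_nonneg (by positivity),
      norm_of_nonneg (by positivity)]
    have hle := one_sub_rpow_le u hu0.le n
    have e : u * u ^ (-d-1) = u ^ (-d) := by
      nth_rewrite 1 [← Real.rpow_one u]
      rw [← Real.rpow_add hu0]
      ring_nf
    calc (1 - (1+u)^(-(n:ℝ))) * u ^ (-d-1) ≤ ((n:ℝ) * u) * u ^ (-d-1) := by
          have := Real.rpow_pos_of_pos hu0 (-d-1)
          nlinarith
      _ = (n:ℝ) * u ^ (-d) := by rw [mul_assoc, e]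
  have h2 : IntegrableOn (fun u : ℝ => (1 - (1 + u) ^ (-(n:ℝ))) * u ^ (-d-1)) (Ioi (1:ℝ)) := by
    have hb : IntegrableOn (fun u : ℝ => u ^ (-d-1)) (Ioi (1:ℝ)) :=
      integrableOn_Ioi_rpow_of_lt (by linarith) one_pos
    refine Integrable.mono hb (hmeas _ (fun u hu => show (0:ℝ) < u from lt_trans one_pos hu) measurableSet_Ioi) ?_
    filter_upwards [ae_restrict_mem measurableSet_Ioi] with u hu
    have hu0 : (0:ℝ) < u := lt_trans one_pos hu
    rw [norm_mul, norm_of_nonneg (hnonneg u hu0), norm_of_nonneg (by positivity)]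
    have h1' : 1 - (1+u)^(-(n:ℝ)) ≤ 1 := by
      have : (0:ℝ) ≤ (1+u)^(-(n:ℝ)) := Real.rpow_nonneg (by linarith) _
      linarith
    nlinarith [Real.rpow_pos_of_pos hu0 (-d-1)]
  have h := h1.union h2
  rwa [Ioc_union_Ioi_eq_Ioi zero_le_one] at h

lemma Jval (d : ℝ) (hd0 : 0 < d) (hd1 : d < 1) :
    ∀ N : ℕ, 1 ≤ N →
      ∫ u in Ioi (0:ℝ), (1 - (1 + u) ^ (-(N:ℝ))) * u ^ (-d-1)
        = Gamma ((N:ℝ) + d) * Gamma (1-d) / (d * Gamma (N:ℝ)) := by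
  refine Nat.le_induction ?_ ?_
  · -- base case N = 1
    have congr1 : ∀ u ∈ Ioi (0:ℝ),
        (1 - (1 + u) ^ (-((1:ℕ):ℝ))) * u ^ (-d-1)
          = u ^ ((1-d)-1) * (1+u) ^ (-((1-d)+d)) := by
      intro u hu
      have hu0 : (0:ℝ) < u := hu
      have h1u : (0:ℝ) < 1 + u := by linarith
      have e0 : (1 + u) ^ (-((1:ℕ):ℝ)) = (1+u)⁻¹ := by
        norm_num [Real.rpow_neg_one]
      have e1 : 1 - (1+u)⁻¹ = u * (1+u)⁻¹ := by field_simp; ring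
      have e2 : u * u ^ (-d-1) = u ^ (-d) := by
        nth_rewrite 1 [← Real.rpow_one u]
        rw [← Real.rpow_add hu0]
        ring_nf
      rw [e0, e1, show (1-d)-1 = -d from by ring, show -((1-d)+d) = (-1 : ℝ) from by ring,
        Real.rpow_neg_one, mul_assoc, mul_comm ((1+u)⁻¹), ← mul_assoc, e2]
    rw [setIntegral_congr_fun measurableSet_Ioi congr1,
      betaIoi (1-d) d (by linarith) hd0]
    have h1 : (1-d) + d = 1 := by ring
    rw [h1, Real.Gamma_one]
    have h2 : ((1:ℕ):ℝ) + d = d + 1 := by push_cast; ring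
    rw [h2, Real.Gamma_add_one hd0.ne']
    have h3 : Gamma ((1:ℕ):ℝ) = 1 := by norm_num [Real.Gamma_one]
    rw [h3]
    field_simp
  · -- inductive step
    intro n hn ih
    have hn0 : (0:ℝ) < n := by exact_mod_cast hn
    have split : ∀ u ∈ Ioi (0:ℝ),
        (1 - (1 + u) ^ (-(((n+1):ℕ):ℝ))) * u ^ (-d-1)
          = (1 - (1 + u) ^ (-(n:ℝ))) * u ^ (-d-1)
            + u ^ ((1-d)-1) * (1+u) ^ (-((1-d)+((n:ℝ)+d))) := by
      intro u hu
      have hu0 : (0:ℝ) < u := hu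
      have h1u : (0:ℝ) < 1 + u := by linarith
      have e1 : (1+u) ^ (-(n:ℝ)) = (1+u) ^ (-((n:ℝ)+1)) * (1+u) := by
        nth_rewrite 3 [← Real.rpow_one (1+u)]
        rw [← Real.rpow_add h1u]
        ring_nf
      have e2 : u * u ^ (-d-1) = u ^ (-d) := by
        nth_rewrite 1 [← Real.rpow_one u]
        rw [← Real.rpow_add hu0]
        ring_nf
      rw [show (-(((n+1):ℕ):ℝ)) = -((n:ℝ)+1) from by push_cast; ring,
        show ((1-d)-1 : ℝ) = -d from by ring,
        show -((1-d)+((n:ℝ)+d)) = -((n:ℝ)+1) from by ring, e1, ← e2]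
      ring
    rw [setIntegral_congr_fun measurableSet_Ioi split,
      integral_add (int_J d hd0 hd1 n)
        (int_pow_beta ((1-d)-1) (-((1-d)+((n:ℝ)+d))) (by linarith) (by nlinarith)
          (by push_cast; nlinarith)),
      ih, betaIoi (1-d) ((n:ℝ)+d) (by linarith) (by nlinarith)]
    have hGn : Gamma (n:ℝ) ≠ 0 := (Real.Gamma_pos_of_pos hn0).ne'
    rw [show ((1-d)+((n:ℝ)+d)) = (n:ℝ)+1 from by ring,
      show (((n+1):ℕ):ℝ) = (n:ℝ)+1 from by push_cast; ring,
      show ((n:ℝ)+1+d) = ((n:ℝ)+d)+1 from by ring,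
      Real.Gamma_add_one (by nlinarith : ((n:ℝ)+d) ≠ 0),
      Real.Gamma_add_one hn0.ne']
    field_simp

/-- The radial integral identity for Gamma fading gains: for `α > 2`, `t > 0`, `N ≥ 1`,
`∫_0^∞ (1 - (1 + t r^(-α))^(-N)) r dr = (t^(2/α)/2) Γ(N + 2/α) Γ(1 - 2/α)/Γ(N)`. -/
theorem radial_integral_C_alpha_N (α t : ℝ) (hα : 2 < α) (ht : 0 < t)
    (N : ℕ) (hN : 1 ≤ N) :
    (∫ r in Set.Ioi (0 : ℝ), (1 - (1 + t * r ^ (-α)) ^ (-(N : ℝ))) * r) =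
      t ^ (2 / α) / 2 * Real.Gamma ((N : ℝ) + 2 / α) * Real.Gamma (1 - 2 / α) /
        Real.Gamma (N : ℝ) := by
  have hα0 : (0:ℝ) < α := by linarith
  have hd0 : (0:ℝ) < 2/α := by positivity
  have hd1 : (2:ℝ)/α < 1 := by rw [div_lt_one hα0]; linarith
  have Jval := Jval (2/α) hd0 hd1 N hN
  set c : ℝ := t ^ (α⁻¹) with hc_def
  have hc : 0 < c := Real.rpow_pos_of_pos ht _
  -- Step A: scaling r = c * x
  have stepA := integral_comp_mul_left_Ioi
    (fun r : ℝ => (1 - (1 + t * r ^ (-α)) ^ (-(N : ℝ))) * r) 0 hc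
  rw [mul_zero, smul_eq_mul] at stepA
  have scaled : ∀ x ∈ Ioi (0:ℝ),
      (1 - (1 + t * (c * x) ^ (-α)) ^ (-(N : ℝ))) * (c * x)
        = c * ((1 - (1 + x ^ (-α)) ^ (-(N : ℝ))) * x) := by
    intro x hx
    have hx0 : (0:ℝ) < x := hx
    have e1 : t * (c * x) ^ (-α) = x ^ (-α) := by
      rw [Real.mul_rpow hc.le hx0.le, hc_def]
      rw [← Real.rpow_mul ht.le, show α⁻¹ * (-α) = -1 from by field_simp, Real.rpow_neg_one]
      field_simp
    rw [e1]; ring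
  rw [setIntegral_congr_fun measurableSet_Ioi scaled, integral_const_mul] at stepA
  -- from stepA : c * ∫ = c⁻¹ * I, so I = c^2 * ∫
  have hI : (∫ r in Set.Ioi (0 : ℝ), (1 - (1 + t * r ^ (-α)) ^ (-(N : ℝ))) * r)
      = c * c * ∫ x in Ioi (0:ℝ), (1 - (1 + x ^ (-α)) ^ (-(N : ℝ))) * x := by
    have := stepA
    field_simp at this
    linarith [this]
  -- Step B : substitution u = x^(-α)
  have hp : (-α) ≠ 0 := by linarith
  have stepB := integral_comp_rpow_Ioi
    (fun u : ℝ => (1 - (1 + u) ^ (-(N:ℝ))) * u ^ (-(2/α)-1)) hp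
  have ptB : ∀ x ∈ Ioi (0:ℝ),
      (|(-α)| * x ^ ((-α)-1)) • ((1 - (1 + x ^ (-α)) ^ (-(N:ℝ))) * (x ^ (-α)) ^ (-(2/α)-1))
        = α * ((1 - (1 + x ^ (-α)) ^ (-(N : ℝ))) * x) := by
    intro x hx
    have hx0 : (0:ℝ) < x := hx
    have e1 : (x ^ (-α)) ^ (-(2/α)-1) = x ^ (2+α) := by
      rw [← Real.rpow_mul hx0.le]
      congr 1
      field_simp
      ring
    have e2 : x ^ ((-α)-1) * x ^ (2+α) = x := by
      rw [← Real.rpow_add hx0, show -α - 1 + (2 + α) = 1 from by ring, Real.rpow_one]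
    rw [e1, smul_eq_mul, abs_neg, abs_of_pos hα0]
    calc α * x ^ (-α-1) * ((1 - (1 + x ^ (-α)) ^ (-(N:ℝ))) * x ^ (2+α))
        = α * ((1 - (1 + x ^ (-α)) ^ (-(N:ℝ))) * (x ^ (-α-1) * x ^ (2+α))) := by ring
      _ = α * ((1 - (1 + x ^ (-α)) ^ (-(N:ℝ))) * x) := by rw [e2]
  rw [setIntegral_congr_fun measurableSet_Ioi ptB, integral_const_mul] at stepB
  -- assemble
  have hcc : c * c = t ^ (2/α) := by
    rw [hc_def, ← Real.rpow_add ht]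
    congr 1
    field_simp
    ring
  have hGN : Gamma (N:ℝ) ≠ 0 := by
    have : (0:ℝ) < N := by exact_mod_cast hN
    exact (Real.Gamma_pos_of_pos this).ne'
  rw [hI, hcc]
  have hJ : (∫ x in Ioi (0:ℝ), (1 - (1 + x ^ (-α)) ^ (-(N : ℝ))) * x)
      = α⁻¹ * (Gamma ((N:ℝ) + 2/α) * Gamma (1-2/α) / ((2/α) * Gamma (N:ℝ))) := by
    rw [← Jval, ← stepB]
    field_simp
  rw [hJ]
  field_simp
end

section
/- Let 0 < δ < 1 and c > 0 be reals. For every integer m ≥ 1 and every real s > 0, (−1)^m · s^m · (d^m/ds^m) e^(−c s^δ) = e^(−c s^δ) · Σ_{n=1}^{m} (δ c s^δ)^n · Υ_{m,n}. -/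
open Real Finset

/-- `Υ_{m,n} = ∑_{ψ ⊆ {1,…,m-1}, |ψ| = m-n} ∏_{i=1}^{m-n} (l_i - δ(l_i - i + 1))`,
where `l_1 < l_2 < ⋯ < l_{m-n}` enumerate the elements of `ψ` in increasing order.
(Here the product is written with `0`-based index `j = i - 1`, so that the `i`-th
factor `l_i - δ(l_i - i + 1)` becomes `l - δ(l - j)` with `l` the `j`-th smallest
element of `ψ`.) -/
noncomputable def Upsilon (δ : ℝ) (m n : ℕ) : ℝ :=
  ∑ ψ ∈ Finset.powersetCard (m - n) (Finset.Icc 1 (m - 1)),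
    ∏ j ∈ Finset.range (m - n),
      (((ψ.sort (· ≤ ·)).getD j 0 : ℝ) - δ * (((ψ.sort (· ≤ ·)).getD j 0 : ℝ) - (j : ℝ)))

lemma upsilon_self (δ : ℝ) (m : ℕ) : Upsilon δ m m = 1 := by
  simp [Upsilon]

lemma upsilon_zero (δ : ℝ) (m : ℕ) (hm : 1 ≤ m) : Upsilon δ m 0 = 0 := by
  have h : (Finset.Icc 1 (m - 1)).card < m - 0 := by
    rw [Nat.card_Icc]; omega
  rw [Upsilon, Finset.powersetCard_eq_empty.2 h, Finset.sum_empty]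

lemma sort_insert_max {a : ℕ} {s : Finset ℕ} (h : ∀ b ∈ s, b < a) :
    (insert a s).sort (· ≤ ·) = s.sort (· ≤ ·) ++ [a] := by
  have hns : a ∉ s := fun hm => lt_irrefl a (h a hm)
  have hperm : List.Perm ((insert a s).sort (· ≤ ·)) (s.sort (· ≤ ·) ++ [a]) := by
    rw [← Multiset.coe_eq_coe, ← Multiset.coe_add, Finset.sort_eq, Finset.sort_eq,
      Finset.insert_val_of_notMem hns, Multiset.coe_singleton, add_comm,
      Multiset.singleton_add]
  have hs2 : List.Pairwise (· ≤ ·) (s.sort (· ≤ ·) ++ [a]) := by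
    rw [List.pairwise_append]
    refine ⟨Finset.pairwise_sort _ _, List.pairwise_singleton _ a, ?_⟩
    intro x hx y hy
    simp only [List.mem_singleton] at hy
    subst hy
    exact (h x (Finset.mem_sort _ |>.1 hx)).le
  exact List.Perm.eq_of_pairwise' (Finset.pairwise_sort _ _) hs2 hperm

lemma upsilon_rec (δ : ℝ) (m n : ℕ) (h1 : 1 ≤ n) (h2 : n ≤ m) :
    Upsilon δ (m + 1) n = ((m : ℝ) - δ * n) * Upsilon δ m n + Upsilon δ m (n - 1) := by
  have hm1 : 1 ≤ m := le_trans h1 h2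
  set k := m - n with hk
  have e1 : m + 1 - n = k + 1 := by omega
  have e2 : m - (n - 1) = k + 1 := by omega
  have e3 : m + 1 - 1 = m := by omega
  have hIcc : Finset.Icc 1 m = insert m (Finset.Icc 1 (m - 1)) := by
    ext x; simp only [Finset.mem_Icc, Finset.mem_insert]; omega
  have hmem : m ∉ Finset.Icc 1 (m - 1) := by
    simp only [Finset.mem_Icc]; omega
  rw [Upsilon, e1, e3, hIcc, Finset.powersetCard_succ_insert hmem]
  have hdisj : Disjoint (Finset.powersetCard (k + 1) (Finset.Icc 1 (m - 1)))
      ((Finset.powersetCard k (Finset.Icc 1 (m - 1))).image (insert m)) := by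
    rw [Finset.disjoint_left]
    intro ψ hψ hψ'
    rw [Finset.mem_powersetCard] at hψ
    obtain ⟨t, _, rfl⟩ := Finset.mem_image.1 hψ'
    exact hmem (hψ.1 (Finset.mem_insert_self m t))
  rw [Finset.sum_union hdisj]
  have hinj : ∀ ψ₁ ∈ Finset.powersetCard k (Finset.Icc 1 (m - 1)),
      ∀ ψ₂ ∈ Finset.powersetCard k (Finset.Icc 1 (m - 1)),
      insert m ψ₁ = insert m ψ₂ → ψ₁ = ψ₂ := by
    intro ψ₁ hψ₁ ψ₂ hψ₂ heq
    rw [Finset.mem_powersetCard] at hψ₁ hψ₂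
    have h₁ : m ∉ ψ₁ := fun h => hmem (hψ₁.1 h)
    have h₂ : m ∉ ψ₂ := fun h => hmem (hψ₂.1 h)
    have := congrArg (fun t => Finset.erase t m) heq
    simpa [Finset.erase_insert h₁, Finset.erase_insert h₂] using this
  rw [Finset.sum_image hinj]
  have himg : ∀ ψ ∈ Finset.powersetCard k (Finset.Icc 1 (m - 1)),
      (∏ j ∈ Finset.range (k + 1),
        ((((insert m ψ).sort (· ≤ ·)).getD j 0 : ℝ) -
          δ * ((((insert m ψ).sort (· ≤ ·)).getD j 0 : ℝ) - (j : ℝ)))) =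
      ((m : ℝ) - δ * n) * ∏ j ∈ Finset.range k,
        (((ψ.sort (· ≤ ·)).getD j 0 : ℝ) -
          δ * (((ψ.sort (· ≤ ·)).getD j 0 : ℝ) - (j : ℝ))) := by
    intro ψ hψ
    rw [Finset.mem_powersetCard] at hψ
    have hlt : ∀ b ∈ ψ, b < m := by
      intro b hb
      have := Finset.mem_Icc.1 (hψ.1 hb)
      omega
    have hsort : (insert m ψ).sort (· ≤ ·) = ψ.sort (· ≤ ·) ++ [m] :=
      sort_insert_max hlt
    have hlen : (ψ.sort (· ≤ ·)).length = k := by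
      rw [Finset.length_sort, hψ.2]
    rw [Finset.prod_range_succ, hsort]
    have hlast : ((ψ.sort (· ≤ ·)) ++ [m]).getD k 0 = m := by
      rw [List.getD_append_right _ _ _ _ (by omega), hlen, Nat.sub_self]
      rfl
    have hrest : ∀ j ∈ Finset.range k,
        ((ψ.sort (· ≤ ·)) ++ [m]).getD j 0 = (ψ.sort (· ≤ ·)).getD j 0 := by
      intro j hj
      exact List.getD_append _ _ _ _ (by rw [hlen]; exact Finset.mem_range.1 hj)
    rw [hlast, Finset.prod_congr rfl (fun j hj => by rw [hrest j hj]), mul_comm]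
    congr 1
    have : ((k : ℕ) : ℝ) = (m : ℝ) - (n : ℝ) := by
      rw [hk]; push_cast [Nat.cast_sub h2]; ring
    rw [this]; ring
  rw [Finset.sum_congr rfl himg, ← Finset.mul_sum]
  rw [Upsilon, Upsilon, e2]
  ring

lemma sum_rec (δ : ℝ) (m : ℕ) (hm : 1 ≤ m) (g : ℕ → ℝ) :
    ∑ n ∈ Finset.Icc 1 (m + 1), Upsilon δ (m + 1) n * g n =
      (∑ n ∈ Finset.Icc 1 m, (((m : ℝ) - δ * n) * Upsilon δ m n) * g n)
        + ∑ n ∈ Finset.Icc 1 m, Upsilon δ m n * g (n + 1) := by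
  rw [Finset.sum_Icc_succ_top (by omega : 1 ≤ m + 1)]
  have hsplit : ∀ n ∈ Finset.Icc 1 m, Upsilon δ (m + 1) n * g n =
      (((m : ℝ) - δ * n) * Upsilon δ m n) * g n + Upsilon δ m (n - 1) * g n := by
    intro n hn
    rw [Finset.mem_Icc] at hn
    rw [upsilon_rec δ m n hn.1 hn.2]; ring
  rw [Finset.sum_congr rfl hsplit, Finset.sum_add_distrib, upsilon_self, one_mul, add_assoc]
  congr 1
  -- ∑_{n∈Icc 1 m} Υ_{m,n-1} g n + g (m+1) = ∑_{n∈Icc 1 m} Υ_{m,n} g (n+1)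
  have key : ∑ n ∈ Finset.Icc 1 (m + 1), Upsilon δ m (n - 1) * g n
      = ∑ n ∈ Finset.Icc 1 m, Upsilon δ m n * g (n + 1) := by
    have h2 : Finset.Icc 1 (m + 1) = insert 1 (Finset.Icc 2 (m + 1)) := by
      ext x; simp only [Finset.mem_Icc, Finset.mem_insert]; omega
    rw [h2, Finset.sum_insert (by simp)]
    rw [upsilon_zero δ m hm, zero_mul, zero_add]
    have h3 : Finset.Icc 2 (m + 1) = (Finset.Icc 1 m).map (addRightEmbedding 1) := by
      rw [Finset.map_add_right_Icc]
    rw [h3, Finset.sum_map]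
    apply Finset.sum_congr rfl
    intro n _
    simp [addRightEmbedding]
  rw [← key, Finset.sum_Icc_succ_top (by omega : 1 ≤ m + 1)]
  congr 1
  simp [upsilon_self]

lemma key_deriv (δ c : ℝ) (hδ0 : 0 < δ) (hc : 0 < c) (a : ℝ) {s : ℝ} (hs : 0 < s) :
    HasDerivAt (fun x : ℝ => Real.exp (-(c * x ^ δ)) * x ^ a)
      (Real.exp (-(c * s ^ δ)) *
        ((a * s ^ (a - 1)) - δ * c * s ^ (a + δ - 1))) s := by
  have hrp : HasDerivAt (fun x : ℝ => x ^ δ) (δ * s ^ (δ - 1)) s :=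
    Real.hasDerivAt_rpow_const (Or.inl hs.ne')
  have hexp : HasDerivAt (fun x : ℝ => Real.exp (-(c * x ^ δ)))
      (Real.exp (-(c * s ^ δ)) * (-(c * (δ * s ^ (δ - 1))))) s :=
    ((hrp.const_mul c).neg).exp
  have hpow : HasDerivAt (fun x : ℝ => x ^ a) (a * s ^ (a - 1)) s :=
    Real.hasDerivAt_rpow_const (Or.inl hs.ne')
  have := hexp.fun_mul hpow
  refine this.congr_deriv ?_
  have h1 : s ^ (a + δ - 1) = s ^ (δ - 1) * s ^ a := by
    rw [← Real.rpow_add hs]; ring_nf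
  rw [h1]; ring

lemma key_form (δ c : ℝ) (hδ0 : 0 < δ) (hδ1 : δ < 1) (hc : 0 < c) :
    ∀ m : ℕ, 1 ≤ m → ∀ s : ℝ, 0 < s →
    iteratedDeriv m (fun x : ℝ => Real.exp (-(c * x ^ δ))) s =
      ∑ n ∈ Finset.Icc 1 m,
        ((-1 : ℝ) ^ m * (δ * c) ^ n * Upsilon δ m n) *
          (Real.exp (-(c * s ^ δ)) * s ^ (δ * n - m)) := by
  intro m
  induction m with
  | zero => intro h; omega
  | succ m ih =>
    intro _ s hs
    rcases Nat.eq_zero_or_pos m with hm0 | hm1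
    · -- base case m + 1 = 1
      subst hm0
      rw [iteratedDeriv_one]
      have hder := key_deriv δ c hδ0 hc 0 hs
      have h0 : ∀ x : ℝ, 0 < x →
          Real.exp (-(c * x ^ δ)) * x ^ (0 : ℝ) = Real.exp (-(c * x ^ δ)) := by
        intro x hx; rw [Real.rpow_zero, mul_one]
      have heq : (fun x : ℝ => Real.exp (-(c * x ^ δ))) =ᶠ[nhds s]
          (fun x : ℝ => Real.exp (-(c * x ^ δ)) * x ^ (0 : ℝ)) := by
        filter_upwards [isOpen_Ioi.mem_nhds (Set.mem_Ioi.2 hs)] with x hx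
        exact (h0 x hx).symm
      rw [Filter.EventuallyEq.deriv_eq heq, hder.deriv]
      simp only [Finset.Icc_self, Finset.sum_singleton, upsilon_self]
      have e : δ * ((1 : ℕ) : ℝ) - (((0 : ℕ) + 1 : ℕ) : ℝ) = 0 + δ - 1 := by
        push_cast; ring
      rw [e]
      ring
    · -- inductive step
      rw [iteratedDeriv_succ]
      set G := fun x : ℝ => ∑ n ∈ Finset.Icc 1 m,
        ((-1 : ℝ) ^ m * (δ * c) ^ n * Upsilon δ m n) *
          (Real.exp (-(c * x ^ δ)) * x ^ (δ * n - m)) with hG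
      have heq : iteratedDeriv m (fun x : ℝ => Real.exp (-(c * x ^ δ))) =ᶠ[nhds s] G := by
        filter_upwards [isOpen_Ioi.mem_nhds (Set.mem_Ioi.2 hs)] with x hx
        exact ih hm1 x hx
      rw [Filter.EventuallyEq.deriv_eq heq]
      have hder : HasDerivAt G
          (∑ n ∈ Finset.Icc 1 m,
            ((-1 : ℝ) ^ m * (δ * c) ^ n * Upsilon δ m n) *
              (Real.exp (-(c * s ^ δ)) *
                (((δ * n - m) * s ^ ((δ * n - m) - 1)) -
                  δ * c * s ^ ((δ * n - m) + δ - 1)))) s := by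
        apply HasDerivAt.fun_sum
        intro n _
        exact (key_deriv δ c hδ0 hc (δ * n - m) hs).const_mul _
      rw [hder.deriv]
      set g : ℕ → ℝ := fun n => (-1 : ℝ) ^ (m + 1) * (δ * c) ^ n *
          (Real.exp (-(c * s ^ δ)) * s ^ (δ * (n : ℝ) - ((m : ℝ) + 1))) with hg
      have hΥrec := sum_rec δ m hm1 g
      calc ∑ n ∈ Finset.Icc 1 m,
            ((-1 : ℝ) ^ m * (δ * c) ^ n * Upsilon δ m n) *
              (Real.exp (-(c * s ^ δ)) *
                (((δ * n - m) * s ^ ((δ * n - m) - 1)) -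
                  δ * c * s ^ ((δ * n - m) + δ - 1)))
          = (∑ n ∈ Finset.Icc 1 m, (((m : ℝ) - δ * n) * Upsilon δ m n) * g n)
            + ∑ n ∈ Finset.Icc 1 m, Upsilon δ m n * g (n + 1) := by
            rw [← Finset.sum_add_distrib]
            apply Finset.sum_congr rfl
            intro n _
            have e1 : δ * (n : ℝ) - (m : ℝ) - 1 = δ * (n : ℝ) - ((m : ℝ) + 1) := by ring
            have e2 : δ * (n : ℝ) - (m : ℝ) + δ - 1
                = δ * (((n : ℕ) + 1 : ℕ) : ℝ) - ((m : ℝ) + 1) := by push_cast; ring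
            rw [e1, e2, hg]
            simp only []
            rw [pow_succ (-1 : ℝ) m, pow_succ (δ * c) n]
            push_cast
            ring
        _ = ∑ n ∈ Finset.Icc 1 (m + 1), Upsilon δ (m + 1) n * g n := hΥrec.symm
        _ = ∑ n ∈ Finset.Icc 1 (m + 1),
              ((-1 : ℝ) ^ (m + 1) * (δ * c) ^ n * Upsilon δ (m + 1) n) *
                (Real.exp (-(c * s ^ δ)) * s ^ (δ * (n : ℝ) - ((m + 1 : ℕ) : ℝ))) := by
            apply Finset.sum_congr rfl
            intro n _
            rw [hg]
            simp only []
            push_cast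
            ring

/-- Closed form for the higher derivatives of `s ↦ e^(-c s^δ)`: for `0 < δ < 1`, `c > 0`,
`m ≥ 1` and `s > 0`,
`(-1)^m s^m (d^m/ds^m) e^(-c s^δ) = e^(-c s^δ) ∑_{n=1}^m (δ c s^δ)^n Υ_{m,n}`. -/
theorem iteratedDeriv_exp_neg_rpow (δ c : ℝ) (hδ0 : 0 < δ) (hδ1 : δ < 1) (hc : 0 < c)
    (m : ℕ) (hm : 1 ≤ m) (s : ℝ) (hs : 0 < s) :
    (-1 : ℝ) ^ m * s ^ m * iteratedDeriv m (fun x : ℝ => Real.exp (-(c * x ^ δ))) s =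
      Real.exp (-(c * s ^ δ)) *
        ∑ n ∈ Finset.Icc 1 m, (δ * c * s ^ δ) ^ n * Upsilon δ m n := by
  rw [key_form δ c hδ0 hδ1 hc m hm s hs, Finset.mul_sum, Finset.mul_sum]
  apply Finset.sum_congr rfl
  intro n _
  have h1 : (s : ℝ) ^ m = s ^ (m : ℝ) := by
    rw [Real.rpow_natCast]
  have h2 : s ^ ((m : ℝ)) * s ^ (δ * n - m) = s ^ (δ * (n : ℝ)) := by
    rw [← Real.rpow_add hs]; ring_nf
  have h3 : (δ * c * s ^ δ) ^ n = (δ * c) ^ n * s ^ (δ * (n : ℝ)) := by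
    rw [mul_pow, ← Real.rpow_natCast (s ^ δ) n, ← Real.rpow_mul hs.le]
    try ring_nf
  have h4 : ((-1 : ℝ) ^ m) * ((-1 : ℝ) ^ m) = 1 := by
    rw [← pow_add, Even.neg_one_pow ⟨m, rfl⟩]
  calc (-1 : ℝ) ^ m * s ^ m *
        (((-1 : ℝ) ^ m * (δ * c) ^ n * Upsilon δ m n) *
          (Real.exp (-(c * s ^ δ)) * s ^ (δ * n - m)))
      = ((-1 : ℝ) ^ m * (-1 : ℝ) ^ m) * (δ * c) ^ n * Upsilon δ m n *
          Real.exp (-(c * s ^ δ)) * (s ^ (m : ℝ) * s ^ (δ * n - m)) := by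
        rw [h1]; ring
    _ = Real.exp (-(c * s ^ δ)) * ((δ * c * s ^ δ) ^ n * Upsilon δ m n) := by
        rw [h4, h2, h3]; ring
end

section
/- Let 0 < δ < 1 and b > 0 be reals and M ≥ 0 an integer. Define P(Λ) := e^(−Λb) · (1 + Σ_{m=1}^{M} (1/m!) Σ_{n=1}^{m} (δΛb)^n Υ_{m,n}) for Λ ∈ ℝ. Then P(0) = 1 and P is differentiable at 0 with P′(0) = −b · K_{δ,M+1}, where K_{δ,N} := 1 + Σ_{m=1}^{N−1} (1/m!) ∏_{l=0}^{m−1} (l − δ). -/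
open Real Finset

lemma sort_Icc_one (k : ℕ) : (Finset.Icc 1 k).sort (· ≤ ·) = List.range' 1 k := by
  apply List.Perm.eq_of_sortedLE (Finset.pairwise_sort _ _).sortedLE
    ((List.pairwise_le_range' (s := 1) (n := k)).imp (by simp)).sortedLE
  rw [← Multiset.coe_eq_coe, Finset.sort_eq, Nat.Icc_eq_range']
  simp

lemma Upsilon_one (δ : ℝ) (m : ℕ) :
    Upsilon δ m 1 = ∏ j ∈ Finset.range (m - 1), ((j : ℝ) + 1 - δ) := by
  have hc : (Finset.Icc 1 (m - 1)).card = m - 1 := by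
    rw [Nat.card_Icc]; omega
  have hps := Finset.powersetCard_self (Finset.Icc 1 (m - 1))
  rw [hc] at hps
  rw [Upsilon, hps, Finset.sum_singleton]
  apply Finset.prod_congr rfl
  intro j hj
  rw [Finset.mem_range] at hj
  rw [sort_Icc_one, List.getD_eq_getElem _ _ (by simpa using hj)]
  simp [List.getElem_range']
  ring

/-- First-order Taylor expansion of
`P(Λ) = e^(-Λb)(1 + ∑_{m=1}^M (1/m!) ∑_{n=1}^m (δΛb)^n Υ_{m,n})` around `Λ = 0`:
`P(0) = 1` and `P'(0) = -b K_{δ,M+1}` where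
`K_{δ,N} = 1 + ∑_{m=1}^{N-1} (1/m!) ∏_{l=0}^{m-1} (l - δ)`. -/
theorem taylor_expansion_connection_probability
    (δ b : ℝ) (hδ0 : 0 < δ) (hδ1 : δ < 1) (hb : 0 < b) (M : ℕ)
    (P : ℝ → ℝ)
    (hP : ∀ Λ : ℝ, P Λ = Real.exp (-(Λ * b)) *
      (1 + ∑ m ∈ Finset.Icc 1 M, (1 / (Nat.factorial m : ℝ)) *
        ∑ n ∈ Finset.Icc 1 m, (δ * Λ * b) ^ n * Upsilon δ m n)) :
    P 0 = 1 ∧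
    HasDerivAt P
      (-(b * (1 + ∑ m ∈ Finset.Icc 1 M, (1 / (Nat.factorial m : ℝ)) *
        ∏ l ∈ Finset.range m, ((l : ℝ) - δ)))) 0 := by
  -- the inner sum vanishes at Λ = 0
  have hzero : ∀ m ∈ Finset.Icc 1 M,
      (1 / (Nat.factorial m : ℝ)) *
        ∑ n ∈ Finset.Icc 1 m, (δ * (0:ℝ) * b) ^ n * Upsilon δ m n = 0 := by
    intro m _
    rw [Finset.sum_eq_zero, mul_zero]
    intro n hn
    rw [Finset.mem_Icc] at hn
    have : (δ * (0:ℝ) * b) ^ n = 0 := by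
      rw [mul_zero, zero_mul, zero_pow (by omega)]
    rw [this, zero_mul]
  have hP0 : P 0 = 1 := by
    rw [hP, Finset.sum_congr rfl hzero]
    simp
  refine ⟨hP0, ?_⟩
  -- derivative of the polynomial factor
  have hinner : ∀ m ∈ Finset.Icc 1 M,
      HasDerivAt (fun Λ : ℝ => ∑ n ∈ Finset.Icc 1 m, (δ * Λ * b) ^ n * Upsilon δ m n)
        (∑ n ∈ Finset.Icc 1 m, ((n : ℝ) * (δ * (0:ℝ) * b) ^ (n - 1) * (δ * b)) * Upsilon δ m n)
        0 := by
    intro m _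
    apply HasDerivAt.fun_sum
    intro n _
    have h1 : HasDerivAt (fun Λ : ℝ => δ * Λ * b) (δ * b) 0 := by
      have := ((hasDerivAt_id (0:ℝ)).const_mul δ).mul_const b
      simpa using this
    exact (h1.pow n).mul_const _
  have hsum : ∀ m ∈ Finset.Icc 1 M,
      ∑ n ∈ Finset.Icc 1 m, ((n : ℝ) * (δ * (0:ℝ) * b) ^ (n - 1) * (δ * b)) * Upsilon δ m n
        = δ * b * Upsilon δ m 1 := by
    intro m hm
    rw [Finset.mem_Icc] at hm
    rw [Finset.sum_eq_single_of_mem 1 (Finset.mem_Icc.2 ⟨le_refl 1, hm.1⟩)]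
    · norm_num
    · intro n hn hne
      rw [Finset.mem_Icc] at hn
      have : (δ * (0:ℝ) * b) ^ (n - 1) = 0 := by
        rw [mul_zero, zero_mul, zero_pow (by omega)]
      rw [this]; ring
  have hS : HasDerivAt
      (fun Λ : ℝ => 1 + ∑ m ∈ Finset.Icc 1 M, (1 / (Nat.factorial m : ℝ)) *
        ∑ n ∈ Finset.Icc 1 m, (δ * Λ * b) ^ n * Upsilon δ m n)
      (∑ m ∈ Finset.Icc 1 M, (1 / (Nat.factorial m : ℝ)) * (δ * b * Upsilon δ m 1)) 0 := by
    have hS' := HasDerivAt.const_add (1:ℝ)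
      (HasDerivAt.fun_sum (fun m hm => (hinner m hm).const_mul (1 / (Nat.factorial m : ℝ))))
    rwa [Finset.sum_congr rfl (fun m hm => by rw [hsum m hm] : ∀ m ∈ Finset.Icc 1 M,
      (1 / (Nat.factorial m : ℝ)) *
        (∑ n ∈ Finset.Icc 1 m, ((n : ℝ) * (δ * (0:ℝ) * b) ^ (n - 1) * (δ * b)) * Upsilon δ m n)
      = (1 / (Nat.factorial m : ℝ)) * (δ * b * Upsilon δ m 1))] at hS'
  have hexp : HasDerivAt (fun Λ : ℝ => Real.exp (-(Λ * b))) (-b) 0 := by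
    have := (((hasDerivAt_id (0:ℝ)).mul_const b).neg).exp
    simpa using this
  have hPfun : P = fun Λ : ℝ => Real.exp (-(Λ * b)) *
      (1 + ∑ m ∈ Finset.Icc 1 M, (1 / (Nat.factorial m : ℝ)) *
        ∑ n ∈ Finset.Icc 1 m, (δ * Λ * b) ^ n * Upsilon δ m n) := funext hP
  have hmain := hexp.fun_mul hS
  rw [← hPfun] at hmain
  refine hmain.congr_deriv ?_
  symm
  -- arithmetic identification of the derivative value
  rw [Finset.sum_congr rfl hzero]
  have hprod : ∀ m ∈ Finset.Icc 1 M,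
      (1 / (Nat.factorial m : ℝ)) * (δ * b * Upsilon δ m 1)
        = -b * ((1 / (Nat.factorial m : ℝ)) * ∏ l ∈ Finset.range m, ((l : ℝ) - δ)) := by
    intro m hm
    rw [Finset.mem_Icc] at hm
    obtain ⟨k, rfl⟩ : ∃ k, m = k + 1 := ⟨m - 1, by omega⟩
    rw [Upsilon_one]
    simp only [Nat.add_sub_cancel]
    rw [Finset.prod_range_succ']
    have hcast : (∏ x ∈ Finset.range k, (((x+1 : ℕ) : ℝ) - δ))
        = ∏ j ∈ Finset.range k, ((j : ℝ) + 1 - δ) := by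
      apply Finset.prod_congr rfl; intro i _; push_cast; ring
    rw [hcast, Nat.cast_zero]
    ring
  rw [Finset.sum_congr rfl hprod, ← Finset.mul_sum]
  simp
  ring
end

section
/- With α > 2, δ := 2/α, X, Y, Z > 0 satisfying (X/Z)^(2/α) > Y, and λ^L := 1/((X/Z)^(2/α) − Y): one has f₁(λ^L) = f₂(λ^L), and the derivative of F at λ^L equals (f₁(λ^L) − 1)/(δ · f₁(λ^L) · (1 + λ^L Y)), which is strictly positive. -/
open Real

/-- Boundary evaluation in Appendix E of the paper: with `δ = 2/α`,
`f₁(λ) = 1 + X(1+Yλ)^(-α/2)`, `f₂(λ) = 1 + Zλ^(-α/2)`, `F(λ) = λ ln(f₁(λ)/f₂(λ))`,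
and `λ^L = 1/((X/Z)^(2/α) - Y)` (assuming `(X/Z)^(2/α) > Y`):
one has `f₁(λ^L) = f₂(λ^L)` and `F'(λ^L) = (f₁(λ^L)-1)/(δ f₁(λ^L)(1+λ^L Y)) > 0`. -/
theorem F_deriv_at_lower_boundary (α X Y Z : ℝ) (hα : 2 < α)
    (hX : 0 < X) (hY : 0 < Y) (hZ : 0 < Z)
    (hcond : (X / Z) ^ (2 / α) > Y)
    (lL : ℝ) (hlL : lL = 1 / ((X / Z) ^ (2 / α) - Y))
    (f₁ f₂ F : ℝ → ℝ)
    (hf₁ : ∀ l : ℝ, f₁ l = 1 + X * (1 + Y * l) ^ (-(α / 2)))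
    (hf₂ : ∀ l : ℝ, f₂ l = 1 + Z * l ^ (-(α / 2)))
    (hF : ∀ l : ℝ, F l = l * Real.log (f₁ l / f₂ l)) :
    f₁ lL = f₂ lL ∧
    HasDerivAt F ((f₁ lL - 1) / ((2 / α) * f₁ lL * (1 + lL * Y))) lL ∧
    0 < (f₁ lL - 1) / ((2 / α) * f₁ lL * (1 + lL * Y)) := by
  have hα0 : (0:ℝ) < α := by linarith
  set p : ℝ := -(α/2) with hp
  have hc : 0 < (X/Z)^(2/α) - Y := sub_pos.mpr hcond
  have hlL0 : 0 < lL := by rw [hlL]; positivity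
  have h1Y : 0 < 1 + Y * lL := by positivity
  have hXZ : 0 < X / Z := by positivity
  have h1 : 1 + Y * lL = (X/Z)^(2/α) * lL := by
    rw [hlL]; field_simp; ring
  have hpow : ((X/Z)^(2/α)) ^ p = Z / X := by
    rw [← Real.rpow_mul hXZ.le]
    have h2 : (2/α) * p = -1 := by rw [hp]; field_simp
    rw [h2, Real.rpow_neg_one, inv_div]
  have key : X * (1 + Y * lL) ^ p = Z * lL ^ p := by
    rw [h1, Real.mul_rpow (Real.rpow_pos_of_pos hXZ _).le hlL0.le, hpow]
    field_simp
  have hA : 0 < (1 + Y * lL) ^ p := Real.rpow_pos_of_pos h1Y p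
  have hB : 0 < lL ^ p := Real.rpow_pos_of_pos hlL0 p
  have hE0 : 0 < X * (1 + Y * lL) ^ p := mul_pos hX hA
  have heq : f₁ lL = f₂ lL := by rw [hf₁, hf₂, key]
  have hf1E : f₁ lL = 1 + X * (1 + Y * lL) ^ p := hf₁ lL
  have h1lY : 0 < 1 + lL * Y := by nlinarith
  refine ⟨heq, ?_, ?_⟩
  · have hFfun : F = fun l => l * Real.log ((1 + X*(1+Y*l)^p)/(1 + Z*l^p)) := by
      funext l; rw [hF, hf₁, hf₂]
    have hg1 : HasDerivAt (fun l : ℝ => 1 + X*(1+Y*l)^p)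
        (X * (p * (1 + Y * lL) ^ (p-1) * Y)) lL := by
      have hin : HasDerivAt (fun l : ℝ => 1 + Y * l) Y lL := by
        simpa using ((hasDerivAt_id lL).const_mul Y).const_add 1
      have := hin.rpow_const (p := p) (Or.inl h1Y.ne')
      simpa [mul_comm, mul_assoc] using (this.const_mul X).const_add 1
    have hg2 : HasDerivAt (fun l : ℝ => 1 + Z*l^p)
        (Z * (p * lL ^ (p-1))) lL := by
      have := Real.hasDerivAt_rpow_const (x := lL) (p := p) (Or.inl hlL0.ne')
      simpa using (this.const_mul Z).const_add 1
    have hg2ne : (1 + Z * lL ^ p) ≠ 0 := by positivity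
    have hq := hg1.div hg2 hg2ne
    have hqval : (1 + X*(1+Y*lL)^p) / (1 + Z*lL^p) = 1 := by
      rw [key, div_self hg2ne]
    have hlog := hq.log (by show (1 + X*(1+Y*lL)^p) / (1 + Z*lL^p) ≠ 0; rw [hqval]; norm_num)
    have hFd := (hasDerivAt_id lL).mul hlog
    have hFd' : HasDerivAt (fun l => l * Real.log ((1 + X*(1+Y*l)^p)/(1 + Z*l^p)))
        (1 * Real.log ((1 + X*(1+Y*lL)^p)/(1 + Z*lL^p)) + lL * (((X * (p * (1 + Y * lL) ^ (p - 1) * Y) * (1 + Z * lL ^ p) - (1 + X * (1 + Y * lL) ^ p) * (Z * (p * lL ^ (p - 1)))) / (1 + Z * lL ^ p) ^ 2) / ((1 + X*(1+Y*lL)^p)/(1 + Z*lL^p)))) lL := hFd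
    rw [hFfun]
    convert hFd' using 1
    rw [hqval, Real.log_one]
    have hr1 : (1 + Y * lL) ^ (p-1) = (1 + Y * lL) ^ p / (1 + Y * lL) := by
      rw [Real.rpow_sub h1Y, Real.rpow_one]
    have hr2 : lL ^ (p-1) = lL ^ p / lL := by
      rw [Real.rpow_sub hlL0, Real.rpow_one]
    have hBdef : lL ^ p = X * (1 + Y * lL) ^ p / Z := by
      rw [eq_div_iff hZ.ne']; linarith [key]
    rw [hf1E, hr1, hr2, hBdef]
    set A : ℝ := (1 + Y * lL) ^ p with hAdef
    have h1XA : (0:ℝ) < 1 + X * A := by positivity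
    rw [hp]
    field_simp
    ring
  · rw [hf1E, add_sub_cancel_left]
    apply div_pos hE0
    exact mul_pos (mul_pos (by positivity) (by linarith)) h1lY
end

section
/- With α > 2, δ := 2/α and X, Y, Z > 0: lim_{λ→∞} λ^(α/2) · F′(λ) = ((α − 2)/2) · (Z − X Y^(−α/2)). In particular, if X > Z Y^(α/2), this limit is strictly negative, and hence F′(λ) < 0 for all sufficiently large λ. -/
open Real Filter Topology

lemma aux_ratio (Y : ℝ) (hY : 0 < Y) (q : ℝ) :
    Tendsto (fun l : ℝ => l ^ q * (1 + Y * l) ^ (-q)) atTop (𝓝 (Y ^ (-q))) := by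
  have h0 : Tendsto (fun l : ℝ => l⁻¹ + Y) atTop (𝓝 (0 + Y)) :=
    tendsto_inv_atTop_zero.add tendsto_const_nhds
  have h1 : Tendsto (fun l : ℝ => (l⁻¹ + Y)⁻¹) atTop (𝓝 Y⁻¹) := by
    simpa using h0.inv₀ (by simpa using hY.ne')
  have h2 : Tendsto (fun l : ℝ => l / (1 + Y * l)) atTop (𝓝 Y⁻¹) := by
    refine h1.congr' ?_
    filter_upwards [eventually_gt_atTop (0:ℝ)] with l hl
    have h1Y : (0:ℝ) < 1 + Y * l := by positivity
    field_simp
  have hc : ContinuousAt (fun x : ℝ => x ^ q) Y⁻¹ :=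
    Real.continuousAt_rpow_const _ _ (Or.inl (by positivity))
  have h3 : Tendsto (fun l : ℝ => (l / (1 + Y * l)) ^ q) atTop (𝓝 ((Y⁻¹) ^ q)) :=
    hc.tendsto.comp h2
  have h4 : (Y⁻¹ : ℝ) ^ q = Y ^ (-q) := by
    rw [Real.inv_rpow hY.le, Real.rpow_neg hY.le]
  rw [h4] at h3
  refine h3.congr' ?_
  filter_upwards [eventually_gt_atTop (0:ℝ)] with l hl
  have h1Y : (0:ℝ) < 1 + Y * l := by positivity
  rw [Real.div_rpow hl.le h1Y.le, Real.rpow_neg h1Y.le, div_eq_mul_inv]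

lemma aux_slope : Tendsto (fun v : ℝ => Real.log (1 + v) / v) (𝓝[>] (0:ℝ)) (𝓝 1) := by
  have h := (Real.hasDerivAt_log one_ne_zero)
  rw [hasDerivAt_iff_tendsto_slope] at h
  have hmap : Tendsto (fun v : ℝ => 1 + v) (𝓝[>] (0:ℝ)) (𝓝[≠] (1:ℝ)) := by
    apply tendsto_nhdsWithin_of_tendsto_nhds_of_eventually_within
    · have : Tendsto (fun v : ℝ => 1 + v) (𝓝 (0:ℝ)) (𝓝 (1 + 0)) :=
        (continuous_const.add continuous_id).tendsto 0
      simpa using this.mono_left nhdsWithin_le_nhds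
    · filter_upwards [self_mem_nhdsWithin] with v hv
      simp only [Set.mem_compl_iff, Set.mem_singleton_iff]
      intro h; exact absurd (by linarith : v = 0) (ne_of_gt hv)
  have h2 := h.comp hmap
  simp only [inv_one] at h2
  refine h2.congr ?_
  intro v
  simp [slope, Real.log_one]
  ring

/-- Asymptotic sign of `F'` at infinity (equation (dF1_INFTY) of the paper): with
`f₁(λ) = 1 + X(1+Yλ)^(-α/2)`, `f₂(λ) = 1 + Zλ^(-α/2)`, `F(λ) = λ ln(f₁(λ)/f₂(λ))`,
one has `lim_{λ→∞} λ^(α/2) F'(λ) = ((α-2)/2)(Z - X Y^(-α/2))`; in particular, if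
`X > Z Y^(α/2)` then `F'(λ) < 0` for all sufficiently large `λ`. -/
theorem F_deriv_neg_at_infty (α X Y Z : ℝ) (hα : 2 < α)
    (hX : 0 < X) (hY : 0 < Y) (hZ : 0 < Z)
    (f₁ f₂ F : ℝ → ℝ)
    (hf₁ : ∀ l : ℝ, f₁ l = 1 + X * (1 + Y * l) ^ (-(α / 2)))
    (hf₂ : ∀ l : ℝ, f₂ l = 1 + Z * l ^ (-(α / 2)))
    (hF : ∀ l : ℝ, F l = l * Real.log (f₁ l / f₂ l)) :
    Tendsto (fun l : ℝ => l ^ (α / 2) * deriv F l) atTop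
      (nhds (((α - 2) / 2) * (Z - X * Y ^ (-(α / 2))))) ∧
    (X > Z * Y ^ (α / 2) →
      (((α - 2) / 2) * (Z - X * Y ^ (-(α / 2))) < 0 ∧
        ∀ᶠ l : ℝ in atTop, deriv F l < 0)) := by
  set p : ℝ := α / 2 with hpdef
  have hp1 : 1 < p := by rw [hpdef]; linarith
  have hp0 : 0 < p := by linarith
  set d₁ : ℝ → ℝ := fun l => X * (-p * (1 + Y * l) ^ (-p - 1) * Y) with hd₁def
  set d₂ : ℝ → ℝ := fun l => Z * (-p * l ^ (-p - 1)) with hd₂def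
  have hf₁pos : ∀ l : ℝ, 0 < l → 0 < f₁ l := by
    intro l hl
    rw [hf₁ l]
    have : (0:ℝ) < 1 + Y * l := by positivity
    positivity
  have hf₂pos : ∀ l : ℝ, 0 < l → 0 < f₂ l := by
    intro l hl
    rw [hf₂ l]
    positivity
  have hder : ∀ l : ℝ, 0 < l → deriv F l =
      (Real.log (f₁ l) - Real.log (f₂ l)) + l * (d₁ l / f₁ l - d₂ l / f₂ l) := by
    intro l hl
    have h1Y : (0:ℝ) < 1 + Y * l := by positivity
    have hb : HasDerivAt (fun x : ℝ => 1 + Y * x) Y l := by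
      simpa using ((hasDerivAt_id l).const_mul Y).const_add 1
    have hpow : HasDerivAt (fun x : ℝ => x ^ (-p)) (-p * (1 + Y * l) ^ (-p - 1)) (1 + Y * l) :=
      Real.hasDerivAt_rpow_const (Or.inl h1Y.ne')
    have hder₁ : HasDerivAt f₁ (d₁ l) l := by
      have h' : HasDerivAt (fun x : ℝ => 1 + X * (1 + Y * x) ^ (-p)) (d₁ l) l := by
        simpa [Function.comp, hd₁def] using ((hpow.comp l hb).const_mul X).const_add 1
      exact h'.congr_of_eventuallyEq (Filter.Eventually.of_forall hf₁)
    have hpow₂ : HasDerivAt (fun x : ℝ => x ^ (-p)) (-p * l ^ (-p - 1)) l :=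
      Real.hasDerivAt_rpow_const (Or.inl hl.ne')
    have hder₂ : HasDerivAt f₂ (d₂ l) l := by
      have h' : HasDerivAt (fun x : ℝ => 1 + Z * x ^ (-p)) (d₂ l) l := by
        simpa [hd₂def] using (hpow₂.const_mul Z).const_add 1
      exact h'.congr_of_eventuallyEq (Filter.Eventually.of_forall hf₂)
    have hlog₁ : HasDerivAt (fun x => Real.log (f₁ x)) (d₁ l / f₁ l) l :=
      hder₁.log (hf₁pos l hl).ne'
    have hlog₂ : HasDerivAt (fun x => Real.log (f₂ x)) (d₂ l / f₂ l) l :=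
      hder₂.log (hf₂pos l hl).ne'
    have hG : HasDerivAt (fun x : ℝ => x * (Real.log (f₁ x) - Real.log (f₂ x)))
        (1 * (Real.log (f₁ l) - Real.log (f₂ l)) + l * (d₁ l / f₁ l - d₂ l / f₂ l)) l :=
      (hasDerivAt_id l).mul (hlog₁.sub hlog₂)
    have heq : F =ᶠ[𝓝 l] fun x : ℝ => x * (Real.log (f₁ x) - Real.log (f₂ x)) := by
      filter_upwards [Ioi_mem_nhds hl] with x hx
      rw [hF x, Real.log_div (hf₁pos x hx).ne' (hf₂pos x hx).ne']
    rw [heq.deriv_eq, hG.deriv]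
    ring
  -- limits
  have hatTop1Y : Tendsto (fun l : ℝ => 1 + Y * l) atTop atTop := by
    apply tendsto_atTop_add_const_left
    exact Tendsto.const_mul_atTop hY tendsto_id
  have hbase0 : Tendsto (fun l : ℝ => (1 + Y * l) ^ (-p)) atTop (𝓝 0) :=
    (tendsto_rpow_neg_atTop hp0).comp hatTop1Y
  have hu₁0 : Tendsto (fun l : ℝ => X * (1 + Y * l) ^ (-p)) atTop (𝓝 0) := by
    simpa using hbase0.const_mul X
  have hu₂0 : Tendsto (fun l : ℝ => Z * l ^ (-p)) atTop (𝓝 0) := by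
    simpa using ((tendsto_rpow_neg_atTop hp0).const_mul Z)
  have hu₁w : Tendsto (fun l : ℝ => X * (1 + Y * l) ^ (-p)) atTop (𝓝[>] 0) := by
    apply tendsto_nhdsWithin_of_tendsto_nhds_of_eventually_within _ hu₁0
    filter_upwards [eventually_gt_atTop (0:ℝ)] with l hl
    have h1Y : (0:ℝ) < 1 + Y * l := by positivity
    have : (0:ℝ) < X * (1 + Y * l) ^ (-p) := by positivity
    exact this
  have hu₂w : Tendsto (fun l : ℝ => Z * l ^ (-p)) atTop (𝓝[>] 0) := by
    apply tendsto_nhdsWithin_of_tendsto_nhds_of_eventually_within _ hu₂0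
    filter_upwards [eventually_gt_atTop (0:ℝ)] with l hl
    have : (0:ℝ) < Z * l ^ (-p) := by positivity
    exact this
  have T1a : Tendsto (fun l : ℝ => l ^ p * Real.log (f₁ l)) atTop (𝓝 (X * Y ^ (-p))) := by
    have hs := aux_slope.comp hu₁w
    have hprod : Tendsto (fun l : ℝ => l ^ p * (X * (1 + Y * l) ^ (-p))) atTop
        (𝓝 (X * Y ^ (-p))) := by
      have := (aux_ratio Y hY p).const_mul X
      refine this.congr ?_ <;> intro l <;> ring
    have hmul := hs.mul hprod
    rw [one_mul] at hmul
    refine hmul.congr' ?_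
    filter_upwards [eventually_gt_atTop (0:ℝ)] with l hl
    have h1Y : (0:ℝ) < 1 + Y * l := by positivity
    have hu : (0:ℝ) < X * (1 + Y * l) ^ (-p) := by positivity
    rw [hf₁ l]
    simp only [Function.comp]
    field_simp
  have T1b : Tendsto (fun l : ℝ => l ^ p * Real.log (f₂ l)) atTop (𝓝 Z) := by
    have hs := aux_slope.comp hu₂w
    have hmul := hs.mul (tendsto_const_nhds (x := Z) (f := atTop))
    rw [one_mul] at hmul
    refine hmul.congr' ?_
    filter_upwards [eventually_gt_atTop (0:ℝ)] with l hl
    have hu : (0:ℝ) < Z * l ^ (-p) := by positivity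
    have hlp : l ^ p * l ^ (-p) = 1 := by
      rw [← Real.rpow_add hl]; simp
    rw [hf₂ l]
    simp only [Function.comp]
    field_simp
    linear_combination -(Real.log (1 + Z * l ^ (-p))) * hlp
  have hf₁lim : Tendsto f₁ atTop (𝓝 1) := by
    have h : Tendsto (fun l : ℝ => 1 + X * (1 + Y * l) ^ (-p)) atTop (𝓝 (1 + 0)) :=
      tendsto_const_nhds.add hu₁0
    rw [add_zero] at h
    exact h.congr fun l => (hf₁ l).symm
  have hf₂lim : Tendsto f₂ atTop (𝓝 1) := by
    have h : Tendsto (fun l : ℝ => 1 + Z * l ^ (-p)) atTop (𝓝 (1 + 0)) :=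
      tendsto_const_nhds.add hu₂0
    rw [add_zero] at h
    exact h.congr fun l => (hf₂ l).symm
  have T2 : Tendsto (fun l : ℝ => l ^ (p+1) * (d₁ l / f₁ l)) atTop
      (𝓝 (-(p * X * Y ^ (-p)))) := by
    have hnum : Tendsto (fun l : ℝ => l ^ (p+1) * d₁ l) atTop
        (𝓝 (X * (-p * Y ^ (-(p+1))) * Y)) := by
      have hr := aux_ratio Y hY (p+1)
      have h := (hr.const_mul (-p)).const_mul X |>.mul_const Y
      refine h.congr' ?_
      filter_upwards with l
      rw [hd₁def]
      have he : -p - 1 = -(p+1) := by ring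
      rw [he]
      ring
    have hdiv := hnum.div hf₁lim one_ne_zero
    have hval : X * (-p * Y ^ (-(p+1))) * Y / 1 = -(p * X * Y ^ (-p)) := by
      rw [div_one]
      have hsplit : Y ^ (-(p+1)) = Y ^ (-p) * Y⁻¹ := by
        rw [← Real.rpow_neg_one Y, ← Real.rpow_add hY]; ring_nf
      rw [hsplit]
      field_simp
    rw [hval] at hdiv
    refine hdiv.congr ?_
    intro l
    simp only [Pi.div_apply]
    rw [mul_div_assoc]
  have T3 : Tendsto (fun l : ℝ => l ^ (p+1) * (d₂ l / f₂ l)) atTop (𝓝 (-(p * Z))) := by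
    have h := (tendsto_const_nhds (x := -(p*Z)) (f := atTop (α := ℝ))).div hf₂lim one_ne_zero
    rw [div_one] at h
    refine h.congr' ?_
    filter_upwards [eventually_gt_atTop (0:ℝ)] with l hl
    have hlp : l ^ (p+1) * l ^ (-p-1) = 1 := by
      rw [← Real.rpow_add hl]; simp
    have hnum : l ^ (p+1) * d₂ l = -(p * Z) := by
      rw [hd₂def]
      linear_combination (-(p*Z)) * hlp
    simp only [Pi.div_apply]
    rw [← hnum, mul_div_assoc]
  -- combine
  have Tmain : Tendsto (fun l : ℝ => l ^ p * deriv F l) atTop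
      (𝓝 (((α - 2) / 2) * (Z - X * Y ^ (-p)))) := by
    have T := (T1a.sub T1b).add (T2.sub T3)
    have hL : ((α - 2) / 2) * (Z - X * Y ^ (-p)) =
        (X * Y ^ (-p) - Z) + (-(p * X * Y ^ (-p)) - -(p * Z)) := by
      rw [hpdef]; ring
    rw [hL]
    refine T.congr' ?_
    filter_upwards [eventually_gt_atTop (0:ℝ)] with l hl
    rw [hder l hl]
    have hsplit : l ^ (p+1) = l ^ p * l := by
      rw [Real.rpow_add hl, Real.rpow_one]
    rw [hsplit]
    ring
  refine ⟨Tmain, fun hXZ => ?_⟩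
  have hYp : (0:ℝ) < Y ^ (-p) := Real.rpow_pos_of_pos hY _
  have hYmul : Y ^ p * Y ^ (-p) = 1 := by
    rw [← Real.rpow_add hY]; simp
  have hZA : Z - X * Y ^ (-p) < 0 := by
    have := mul_lt_mul_of_pos_right hXZ hYp
    nlinarith
  have hLneg : ((α - 2) / 2) * (Z - X * Y ^ (-p)) < 0 :=
    mul_neg_of_pos_of_neg (by linarith) hZA
  refine ⟨hLneg, ?_⟩
  have hev : ∀ᶠ l : ℝ in atTop, l ^ p * deriv F l < 0 :=
    Tmain.eventually_lt_const hLneg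
  filter_upwards [hev, eventually_gt_atTop (0:ℝ)] with l h1 h2
  have hlp : (0:ℝ) < l ^ p := Real.rpow_pos_of_pos h2 _
  nlinarith
end

section
/- With α > 2, δ := 2/α, X, Y, Z > 0 satisfying X > Z Y^(α/2), and λ^L := 1/((X/Z)^(2/α) − Y): define G(λ) := 1 + λ · f′(λ)/f(λ) for λ > λ^L, where f(λ) := ln(f₁(λ)/f₂(λ)) (note f(λ) > 0 for λ > λ^L). Then G′(λ) < 0 for every λ > λ^L; that is, G is strictly decreasing on (λ^L, ∞). -/
open Real

lemma key_algebra (s A B w fl : ℝ) (hs : 1 < s) (hB : 0 < B) (hBA : B < A)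
    (hA : A < 1) (hw : 0 < w) (hw1 : w < 1) (hfl : 0 < fl)
    (hub : fl * (1 - A) < A - B) :
    s * (s * (w ^ 2 * A * (1 - A) - B * (1 - B)) - w * (1 - w) * A) * fl
      < (s * (B - w * A)) ^ 2 := by
  have hA0 : 0 < A := hB.trans hBA
  have hs0 : (0:ℝ) < s := lt_trans one_pos hs
  set Q := s * (w ^ 2 * A * (1 - A) - B * (1 - B)) - w * (1 - w) * A with hQdef
  rcases le_or_gt Q 0 with hQ0 | hQ0
  · rcases eq_or_ne B (w * A) with he | hne
    · have hQneg : Q < 0 := by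
        rw [hQdef, he]
        nlinarith [mul_pos hw (mul_pos (sub_pos.mpr hw1) hA0)]
      have hL : s * Q * fl < 0 := by
        have := mul_pos hs0 hfl
        nlinarith
      have hR : (s * (B - w * A)) ^ 2 = 0 := by rw [he]; ring
      linarith
    · have hR : 0 < (s * (B - w * A)) ^ 2 := by
        have h1 : s * (B - w * A) ≠ 0 :=
          mul_ne_zero hs0.ne' (sub_ne_zero.mpr hne)
        positivity
      have hL : s * Q * fl ≤ 0 := by
        have h2 : Q * (s * fl) ≤ 0 :=
          mul_nonpos_of_nonpos_of_nonneg hQ0 (by positivity)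
        nlinarith [h2]
      linarith
  · have h1A : 0 < 1 - A := sub_pos.mpr hA
    have h1 : Q * (A - B) ≤ s * (B - w * A) ^ 2 * (1 - A) := by
      nlinarith [mul_nonneg (mul_nonneg hs0.le hB.le) (sq_nonneg (A - B)),
        mul_nonneg (mul_nonneg (mul_nonneg (mul_nonneg hs0.le hB.le) hA0.le) h1A.le)
          (sq_nonneg (1 - w)),
        mul_nonneg (mul_nonneg (mul_nonneg (sub_pos.mpr hBA).le hw.le)
          (sub_pos.mpr hw1).le) hA0.le]
    have h3 : Q * (fl * (1 - A)) < Q * (A - B) := mul_lt_mul_of_pos_left hub hQ0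
    have h5 : (s * Q * fl) * (1 - A) < ((s * (B - w * A)) ^ 2) * (1 - A) := by
      nlinarith [mul_lt_mul_of_pos_left h3 hs0, mul_le_mul_of_nonneg_left h1 hs0.le]
    exact lt_of_mul_lt_mul_right h5 h1A.le

set_option maxHeartbeats 1000000 in
/-- Monotonicity of the auxiliary function `G` (Appendix E of the paper): with
`f₁(λ) = 1 + X(1+Yλ)^(-α/2)`, `f₂(λ) = 1 + Zλ^(-α/2)`, `f(λ) = ln(f₁(λ)/f₂(λ))`,
`G(λ) = 1 + λ f'(λ)/f(λ)`, and `λ^L = 1/((X/Z)^(2/α) - Y)` under `X > Z Y^(α/2)`: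
`f(λ) > 0` and `G'(λ) < 0` for every `λ > λ^L`, and `G` is strictly decreasing
on `(λ^L, ∞)`. -/
theorem G_strictly_decreasing (α X Y Z : ℝ) (hα : 2 < α)
    (hX : 0 < X) (hY : 0 < Y) (hZ : 0 < Z)
    (hcond : X > Z * Y ^ (α / 2))
    (lL : ℝ) (hlL : lL = 1 / ((X / Z) ^ (2 / α) - Y))
    (f₁ f₂ f G : ℝ → ℝ)
    (hf₁ : ∀ l : ℝ, f₁ l = 1 + X * (1 + Y * l) ^ (-(α / 2)))
    (hf₂ : ∀ l : ℝ, f₂ l = 1 + Z * l ^ (-(α / 2)))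
    (hf : ∀ l : ℝ, f l = Real.log (f₁ l / f₂ l))
    (hG : ∀ l : ℝ, G l = 1 + l * deriv f l / f l) :
    (∀ l : ℝ, lL < l → 0 < f l) ∧
    (∀ l : ℝ, lL < l → deriv G l < 0) ∧
    StrictAntiOn G (Set.Ioi lL) := by
  have hα0 : (0:ℝ) < α := by linarith
  set s : ℝ := α / 2 with hs_def
  have hs1 : (1:ℝ) < s := by rw [hs_def]; linarith
  have hs0 : (0:ℝ) < s := by linarith
  have hXZ : 0 < X / Z := div_pos hX hZ
  have hYs : Y ^ s < X / Z := by
    rw [lt_div_iff₀ hZ]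
    nlinarith [hcond]
  have hc : Y < (X / Z) ^ (2 / α) := by
    have h0 : (Y ^ s) ^ (2 / α) < (X / Z) ^ (2 / α) :=
      Real.rpow_lt_rpow (Real.rpow_pos_of_pos hY s).le hYs (by positivity)
    have e : (Y ^ s) ^ (2 / α) = Y := by
      rw [← Real.rpow_mul hY.le, show s * (2 / α) = 1 by
        rw [hs_def]; field_simp, Real.rpow_one]
    rwa [e] at h0
  have hd : 0 < (X / Z) ^ (2 / α) - Y := sub_pos.mpr hc
  have hlL0 : 0 < lL := by rw [hlL]; positivity
  -- key pointwise inequality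
  have key : ∀ t : ℝ, lL < t → Z * t ^ (-s) < X * (1 + Y * t) ^ (-s) := by
    intro t ht
    have ht0 : 0 < t := hlL0.trans ht
    have hpt : 0 < 1 + Y * t := by nlinarith [mul_pos hY ht0]
    have h1t : 1 / t < (X / Z) ^ (2 / α) - Y := by
      rw [hlL] at ht
      rw [div_lt_iff₀ ht0]
      have h2 := (div_lt_iff₀ hd).mp ht
      nlinarith [h2]
    have hrat : (1 + Y * t) / t < (X / Z) ^ (2 / α) := by
      rw [add_div, mul_div_assoc, div_self ht0.ne', mul_one]
      linarith
    have h2 : ((1 + Y * t) / t) ^ s < ((X / Z) ^ (2 / α)) ^ s :=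
      Real.rpow_lt_rpow (by positivity) hrat hs0
    have e2 : ((X / Z) ^ (2 / α)) ^ s = X / Z := by
      rw [← Real.rpow_mul hXZ.le, show 2 / α * s = 1 by
        rw [hs_def]; field_simp, Real.rpow_one]
    have e3 : ((1 + Y * t) / t) ^ s = (1 + Y * t) ^ s / t ^ s :=
      Real.div_rpow hpt.le ht0.le s
    rw [e2, e3, div_lt_div_iff₀ (Real.rpow_pos_of_pos ht0 s) hZ] at h2
    rw [Real.rpow_neg ht0.le, Real.rpow_neg hpt.le, ← div_eq_mul_inv, ← div_eq_mul_inv,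
      div_lt_div_iff₀ (Real.rpow_pos_of_pos ht0 s) (Real.rpow_pos_of_pos hpt s)]
    nlinarith [h2]
  -- positivity of the two factors
  have hposs : ∀ t : ℝ, lL < t → (0:ℝ) < 1 + X * (1 + Y * t) ^ (-s)
      ∧ (0:ℝ) < 1 + Z * t ^ (-s) := by
    intro t ht
    have ht0 : 0 < t := hlL0.trans ht
    have hpt : 0 < 1 + Y * t := by nlinarith [mul_pos hY ht0]
    constructor
    · nlinarith [mul_pos hX (Real.rpow_pos_of_pos hpt (-s))]
    · nlinarith [mul_pos hZ (Real.rpow_pos_of_pos ht0 (-s))]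
  -- value of f
  have hfval : ∀ t : ℝ, lL < t →
      f t = Real.log (1 + X * (1 + Y * t) ^ (-s)) - Real.log (1 + Z * t ^ (-s)) := by
    intro t ht
    obtain ⟨h1p, h2p⟩ := hposs t ht
    rw [hf t, hf₁ t, hf₂ t, Real.log_div h1p.ne' h2p.ne']
  -- positivity of f
  have hfpos : ∀ t : ℝ, lL < t → 0 < f t := by
    intro t ht
    obtain ⟨h1p, h2p⟩ := hposs t ht
    rw [hfval t ht, sub_pos]
    apply Real.log_lt_log h2p
    linarith [key t ht]
  -- derivative of f
  have hfD : ∀ t : ℝ, lL < t → HasDerivAt f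
      (X * (Y * -s * (1 + Y * t) ^ (-s - 1)) / (1 + X * (1 + Y * t) ^ (-s)) -
        Z * (-s * t ^ (-s - 1)) / (1 + Z * t ^ (-s))) t := by
    intro t ht
    have ht0 : 0 < t := hlL0.trans ht
    have hpt : 0 < 1 + Y * t := by nlinarith [mul_pos hY ht0]
    obtain ⟨h1p, h2p⟩ := hposs t ht
    have hq : HasDerivAt (fun u : ℝ => 1 + Y * u) Y t := by
      simpa using ((hasDerivAt_id t).const_mul Y).const_add 1
    have h1 : HasDerivAt (fun u : ℝ => (1 + Y * u) ^ (-s))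
        (Y * -s * (1 + Y * t) ^ (-s - 1)) t := by
      simpa using hq.rpow_const (p := -s) (Or.inl hpt.ne')
    have hF1 : HasDerivAt (fun u : ℝ => 1 + X * (1 + Y * u) ^ (-s))
        (X * (Y * -s * (1 + Y * t) ^ (-s - 1))) t := (h1.const_mul X).const_add 1
    have h2 : HasDerivAt (fun u : ℝ => u ^ (-s)) (-s * t ^ (-s - 1)) t := by
      simpa using Real.hasDerivAt_rpow_const (p := -s) (x := t) (Or.inl ht0.ne')
    have hF2 : HasDerivAt (fun u : ℝ => 1 + Z * u ^ (-s))
        (Z * (-s * t ^ (-s - 1))) t := (h2.const_mul Z).const_add 1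
    have hL := (hF1.log h1p.ne').sub (hF2.log h2p.ne')
    refine hL.congr_of_eventuallyEq ?_
    filter_upwards [isOpen_Ioi.mem_nhds ht] with u hu
    exact hfval u hu
  -- the main pointwise statement
  have main : ∀ l : ℝ, lL < l → ∃ d, HasDerivAt G d l ∧ d < 0 := by
    intro l hl
    have hl0 : 0 < l := hlL0.trans hl
    have hp0 : 0 < 1 + Y * l := by nlinarith [mul_pos hY hl0]
    obtain ⟨h1p, h2p⟩ := hposs l hl
    have hfl : 0 < f l := hfpos l hl
    have hba := key l hl
    set a : ℝ := X * (1 + Y * l) ^ (-s) with ha_def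
    set b : ℝ := Z * l ^ (-s) with hb_def
    have ha0 : 0 < a := by
      rw [ha_def]; exact mul_pos hX (Real.rpow_pos_of_pos hp0 _)
    have hb0 : 0 < b := by
      rw [hb_def]; exact mul_pos hZ (Real.rpow_pos_of_pos hl0 _)
    have e1pos : (0:ℝ) < 1 + a := by linarith
    have e2pos : (0:ℝ) < 1 + b := by linarith
    -- derivative pieces at l
    have hq : HasDerivAt (fun u : ℝ => 1 + Y * u) Y l := by
      simpa using ((hasDerivAt_id l).const_mul Y).const_add 1
    have h1 : HasDerivAt (fun u : ℝ => (1 + Y * u) ^ (-s))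
        (Y * -s * (1 + Y * l) ^ (-s - 1)) l := by
      simpa using hq.rpow_const (p := -s) (Or.inl hp0.ne')
    have hF1 : HasDerivAt (fun u : ℝ => 1 + X * (1 + Y * u) ^ (-s))
        (X * (Y * -s * (1 + Y * l) ^ (-s - 1))) l := (h1.const_mul X).const_add 1
    have h2 : HasDerivAt (fun u : ℝ => u ^ (-s)) (-s * l ^ (-s - 1)) l := by
      simpa using Real.hasDerivAt_rpow_const (p := -s) (x := l) (Or.inl hl0.ne')
    have hF2 : HasDerivAt (fun u : ℝ => 1 + Z * u ^ (-s))
        (Z * (-s * l ^ (-s - 1))) l := (h2.const_mul Z).const_add 1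
    have h1b : HasDerivAt (fun u : ℝ => (1 + Y * u) ^ (-s - 1))
        (Y * (-s - 1) * (1 + Y * l) ^ (-s - 1 - 1)) l := by
      simpa using hq.rpow_const (p := -s - 1) (Or.inl hp0.ne')
    have hu1 : HasDerivAt (fun u : ℝ => X * (Y * -s * (1 + Y * u) ^ (-s - 1)))
        (X * (Y * -s * (Y * (-s - 1) * (1 + Y * l) ^ (-s - 1 - 1)))) l :=
      (h1b.const_mul (Y * -s)).const_mul X
    have h2b : HasDerivAt (fun u : ℝ => u ^ (-s - 1))
        ((-s - 1) * l ^ (-s - 1 - 1)) l := by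
      simpa using Real.hasDerivAt_rpow_const (p := -s - 1) (x := l) (Or.inl hl0.ne')
    have hu2 : HasDerivAt (fun u : ℝ => Z * (-s * u ^ (-s - 1)))
        (Z * (-s * ((-s - 1) * l ^ (-s - 1 - 1)))) l :=
      (h2b.const_mul (-s)).const_mul Z
    have hT1 := hu1.div hF1 h1p.ne'
    have hT2 := hu2.div hF2 h2p.ne'
    have hφ' := hT1.sub hT2
    have hflog := (hF1.log h1p.ne').sub (hF2.log h2p.ne')
    have hflne : Real.log (1 + X * (1 + Y * l) ^ (-s)) - Real.log (1 + Z * l ^ (-s)) ≠ 0 := by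
      have := hfl
      rw [hfval l hl] at this
      exact this.ne'
    have hGexp := ((hasDerivAt_id l).mul hφ').div hflog hflne
    have hGexp2 := hGexp.const_add 1
    have hev : G =ᶠ[nhds l] (fun t : ℝ => 1 +
        id t * (X * (Y * -s * (1 + Y * t) ^ (-s - 1)) / (1 + X * (1 + Y * t) ^ (-s)) -
          Z * (-s * t ^ (-s - 1)) / (1 + Z * t ^ (-s))) /
        (Real.log (1 + X * (1 + Y * t) ^ (-s)) - Real.log (1 + Z * t ^ (-s)))) := by
      filter_upwards [isOpen_Ioi.mem_nhds hl] with u hu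
      rw [hG u, (hfD u hu).deriv, hfval u hu]
      rfl
    have hGD := hGexp2.congr_of_eventuallyEq hev
    refine ⟨_, hGD, ?_⟩
    -- rewrite the messy derivative and show it is negative
    have hfl2 : 0 < Real.log (1 + X * (1 + Y * l) ^ (-s)) - Real.log (1 + Z * l ^ (-s)) := by
      rw [← hfval l hl]; exact hfl
    apply div_neg_of_neg_of_pos _ (pow_pos hfl2 2)
    have hP1 : (1 + Y * l) ^ (-s - 1) = a / (X * (1 + Y * l)) := by
      rw [show -s - 1 = -s + (-1) by ring, Real.rpow_add hp0, Real.rpow_neg_one, ha_def]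
      field_simp
    have hP2 : (1 + Y * l) ^ (-s - 1 - 1) = a / (X * ((1 + Y * l) * (1 + Y * l))) := by
      rw [show -s - 1 - 1 = -s + (-1) + (-1) by ring, Real.rpow_add hp0, Real.rpow_add hp0,
        Real.rpow_neg_one, ha_def]
      field_simp
    have hQ1 : l ^ (-s - 1) = b / (Z * l) := by
      rw [show -s - 1 = -s + (-1) by ring, Real.rpow_add hl0, Real.rpow_neg_one, hb_def]
      field_simp
    have hQ2 : l ^ (-s - 1 - 1) = b / (Z * (l * l)) := by
      rw [show -s - 1 - 1 = -s + (-1) + (-1) by ring, Real.rpow_add hl0, Real.rpow_add hl0,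
        Real.rpow_neg_one, hb_def]
      field_simp
    simp only [Pi.sub_apply, Pi.div_apply, Pi.mul_apply, id_eq]
    rw [hP2, hP1, hQ2, hQ1, ← hfval l hl, ← ha_def, ← hb_def]
    simp only [id_eq, one_mul]
    clear hGD hGexp2 hGexp hev hflog hφ' hT1 hT2 hu1 hu2 h1b h2b hF1 hF2 h1 h2 hq hflne
    have eφ : X * (Y * -s * (a / (X * (1 + Y * l)))) / (1 + a) -
        Z * (-s * (b / (Z * l))) / (1 + b)
        = s * (b / (1 + b) - Y * l / (1 + Y * l) * (a / (1 + a))) / l := by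
      field_simp
      ring
    have eφd : (X * (Y * -s * (Y * (-s - 1) * (a / (X * ((1 + Y * l) * (1 + Y * l)))))) * (1 + a) -
          X * (Y * -s * (a / (X * (1 + Y * l)))) * (X * (Y * -s * (a / (X * (1 + Y * l)))))) /
            (1 + a) ^ 2 -
        (Z * (-s * ((-s - 1) * (b / (Z * (l * l))))) * (1 + b) -
          Z * (-s * (b / (Z * l))) * (Z * (-s * (b / (Z * l))))) / (1 + b) ^ 2
        = (s * (s * ((Y * l / (1 + Y * l)) ^ 2 * (a / (1 + a)) * (1 - a / (1 + a)) -
            b / (1 + b) * (1 - b / (1 + b))) -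
            Y * l / (1 + Y * l) * (1 - Y * l / (1 + Y * l)) * (a / (1 + a)))
          - s * (b / (1 + b) - Y * l / (1 + Y * l) * (a / (1 + a)))) / l ^ 2 := by
      field_simp
      ring
    rw [eφ, eφd]
    -- the key algebraic inequality
    have hBp : 0 < b / (1 + b) := div_pos hb0 e2pos
    have hBA : b / (1 + b) < a / (1 + a) := by
      rw [div_lt_div_iff₀ e2pos e1pos]; nlinarith
    have hA1 : a / (1 + a) < 1 := by rw [div_lt_one e1pos]; linarith
    have hw0 : 0 < Y * l / (1 + Y * l) := div_pos (mul_pos hY hl0) hp0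
    have hw1 : Y * l / (1 + Y * l) < 1 := by rw [div_lt_one hp0]; linarith
    have flub : f l * (1 + b) < a - b := by
      have hx : (0:ℝ) < (1 + a) / (1 + b) := div_pos e1pos e2pos
      have hne1 : (1 + a) / (1 + b) ≠ 1 := by
        rw [Ne, div_eq_one_iff_eq e2pos.ne']
        intro h; linarith
      have hlog := Real.log_lt_sub_one_of_pos hx hne1
      have hfleq : f l = Real.log ((1 + a) / (1 + b)) := by
        rw [hf l, hf₁ l, hf₂ l, ← ha_def, ← hb_def]
      have heq : (1 + a) / (1 + b) - 1 = (a - b) / (1 + b) := by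
        field_simp
        ring
      rw [hfleq]
      have h9 : Real.log ((1 + a) / (1 + b)) < (a - b) / (1 + b) := by
        rw [← heq]; exact hlog
      exact (lt_div_iff₀ e2pos).mp h9
    have hub : f l * (1 - a / (1 + a)) < a / (1 + a) - b / (1 + b) := by
      rw [show (1:ℝ) - a / (1 + a) = 1 / (1 + a) by field_simp; ring,
        div_sub_div a b e1pos.ne' e2pos.ne', mul_one_div,
        div_lt_div_iff₀ e1pos (mul_pos e1pos e2pos)]
      nlinarith [mul_lt_mul_of_pos_right flub e1pos]
    have hkey := key_algebra s (a / (1 + a)) (b / (1 + b)) (Y * l / (1 + Y * l)) (f l)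
      hs1 hBp hBA hA1 hw0 hw1 hfl hub
    set r : ℝ := b / (1 + b) - Y * l / (1 + Y * l) * (a / (1 + a)) with hr_def
    set q : ℝ := s * ((Y * l / (1 + Y * l)) ^ 2 * (a / (1 + a)) * (1 - a / (1 + a)) -
        b / (1 + b) * (1 - b / (1 + b))) -
        Y * l / (1 + Y * l) * (1 - Y * l / (1 + Y * l)) * (a / (1 + a)) with hq_def
    have hsplit : (s * r / l + l * ((s * q - s * r) / l ^ 2)) * f l -
        l * (s * r / l) * (s * r / l) = (s * q * f l - (s * r) ^ 2) / l := by
      field_simp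
      ring
    rw [hsplit]
    exact div_neg_of_neg_of_pos (by linarith [hkey]) hl0
  refine ⟨hfpos, ?_, ?_⟩
  · intro l hl
    obtain ⟨d, hd1, hd2⟩ := main l hl
    rw [hd1.deriv]
    exact hd2
  · apply strictAntiOn_of_deriv_neg (convex_Ioi lL)
    · intro x hx
      obtain ⟨d, hd1, _⟩ := main x hx
      exact hd1.continuousAt.continuousWithinAt
    · rw [interior_Ioi]
      intro x hx
      obtain ⟨d, hd1, hd2⟩ := main x hx
      rw [hd1.deriv]
      exact hd2
end

section
/- With α > 2, δ := 2/α and X, Y, Z > 0 satisfying X > Z Y^(α/2), and λ^L := 1/((X/Z)^(2/α) − Y): there exists a unique λ* ∈ (λ^L, ∞) such that F′(λ*) = 0; moreover F′(λ) > 0 for all λ ∈ (λ^L, λ*) and F′(λ) < 0 for all λ ∈ (λ*, ∞). Consequently F is strictly increasing on (λ^L, λ*], strictly decreasing on [λ*, ∞), and attains its maximum over (λ^L, ∞) uniquely at λ*. -/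
open Real Set

set_option maxHeartbeats 1000000

noncomputable def uu (c X Y l : ℝ) : ℝ := X * (1 + Y*l) ^ (-c)
noncomputable def vv (c Z l : ℝ) : ℝ := Z * l ^ (-c)
noncomputable def ff (c X Y Z l : ℝ) : ℝ :=
  Real.log (1 + uu c X Y l) - Real.log (1 + vv c Z l)
noncomputable def FF (c X Y Z l : ℝ) : ℝ := l * ff c X Y Z l
noncomputable def th (Y l : ℝ) : ℝ := Y*l/(1+Y*l)
noncomputable def UU (c X Y l : ℝ) : ℝ := uu c X Y l / (1 + uu c X Y l)
noncomputable def VV (c Z l : ℝ) : ℝ := vv c Z l / (1 + vv c Z l)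
noncomputable def HH (c X Y Z l : ℝ) : ℝ :=
  ff c X Y Z l + c * (VV c Z l - th Y l * UU c X Y l)

lemma key_poly (U V θ f : ℝ) (hV : 0 < V) (hVU : V < U) (hU : U < 1)
    (hθ0 : 0 ≤ θ) (hθ1 : θ ≤ 1) (hf0 : 0 < f) (hfb : f * (1 - U) ≤ U - V) :
    0 ≤ (V - θ*U)^2 - f * (θ^2*U*(1-U) - V*(1-V)) := by
  rcases le_or_gt (θ^2*U*(1-U) - V*(1-V)) 0 with h | h
  · nlinarith [sq_nonneg (V - θ*U), mul_nonneg hf0.le (neg_nonneg.2 h)]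
  · have h1U : 0 < 1 - U := by linarith
    have hUpos : 0 < U := hV.trans hVU
    -- (1-U)(V-θU)² - (U-V)B = V*(U(1-U)(θ²-2θ+1) + U² - 2UV + V²) - V*U*(1-U)*... :
    have key : (U-V)*(θ^2*U*(1-U) - V*(1-V)) ≤ (1-U)*((V-θ*U)^2) := by
      nlinarith [mul_nonneg (mul_nonneg hV.le (mul_nonneg hUpos.le h1U.le)) (sq_nonneg (θ-1)),
        mul_nonneg hV.le (sq_nonneg (U-V))]
    have h2 : f * (1-U) * (θ^2*U*(1-U) - V*(1-V)) ≤ (U-V)*(θ^2*U*(1-U) - V*(1-V)) :=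
      mul_le_mul_of_nonneg_right hfb h.le
    have h3 : f * (θ^2*U*(1-U) - V*(1-V)) * (1-U) ≤ ((V-θ*U)^2) * (1-U) := by
      nlinarith [key, h2]
    have := le_of_mul_le_mul_right (by linarith [h3] : f * (θ^2*U*(1-U) - V*(1-V)) * (1-U) ≤ ((V-θ*U)^2) * (1-U)) h1U
    linarith

section
variable {c X Y Z l : ℝ}

lemma upos (hX : 0 < X) (hYl : 0 < 1 + Y*l) : 0 < uu c X Y l := by
  unfold uu; positivity

lemma vpos (hZ : 0 < Z) (hl : 0 < l) : 0 < vv c Z l := by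
  unfold vv; positivity

lemma hasDerivAt_u (hl : 0 < 1 + Y*l) :
    HasDerivAt (fun l => uu c X Y l) (-c * X * Y * (1+Y*l)^(-c-1)) l := by
  have h1 : HasDerivAt (fun l : ℝ => 1 + Y*l) Y l := by
    simpa using ((hasDerivAt_id l).const_mul Y).const_add 1
  have h2 : HasDerivAt (fun t : ℝ => t ^ (-c)) (-c * (1+Y*l)^(-c-1)) (1+Y*l) := by
    simpa using Real.hasDerivAt_rpow_const (p := -c) (Or.inl hl.ne')
  have := (h2.comp l h1).const_mul X
  simpa [uu, mul_comm, mul_assoc, mul_left_comm] using this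

lemma hasDerivAt_v (hl : 0 < l) :
    HasDerivAt (fun l => vv c Z l) (-c * Z * l^(-c-1)) l := by
  have h2 : HasDerivAt (fun t : ℝ => t ^ (-c)) (-c * l^(-c-1)) l := by
    simpa using Real.hasDerivAt_rpow_const (p := -c) (Or.inl hl.ne')
  have := h2.const_mul Z
  simpa [vv, mul_comm, mul_assoc, mul_left_comm] using this

lemma hasDerivAt_f (hX : 0 < X) (hZ : 0 < Z) (hl : 0 < l) (hYl : 0 < 1 + Y*l) :
    HasDerivAt (fun l => ff c X Y Z l)
      ((-c * X * Y * (1+Y*l)^(-c-1)) / (1 + uu c X Y l)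
        - (-c * Z * l^(-c-1)) / (1 + vv c Z l)) l := by
  have hu1 : (0:ℝ) < 1 + uu c X Y l := by have := upos (c:=c) (l:=l) hX hYl; linarith
  have hv1 : (0:ℝ) < 1 + vv c Z l := by have := vpos (c:=c) (l:=l) hZ hl; linarith
  have h1 : HasDerivAt (fun l => Real.log (1 + uu c X Y l))
      ((-c * X * Y * (1+Y*l)^(-c-1)) / (1 + uu c X Y l)) l :=
    ((hasDerivAt_u hYl).const_add 1).log hu1.ne'
  have h2 : HasDerivAt (fun l => Real.log (1 + vv c Z l))
      ((-c * Z * l^(-c-1)) / (1 + vv c Z l)) l :=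
    ((hasDerivAt_v hl).const_add 1).log hv1.ne'
  exact h1.sub h2

lemma rpow_shift {x : ℝ} (hx : 0 < x) (c : ℝ) : x^(-c-1) = x^(-c) / x := by
  rw [eq_div_iff hx.ne', ← Real.rpow_add_one hx.ne']
  ring_nf

lemma lDf_eq (hX : 0 < X) (hZ : 0 < Z) (hl : 0 < l) (hYl : 0 < 1 + Y*l) :
    l * ((-c * X * Y * (1+Y*l)^(-c-1)) / (1 + uu c X Y l)
        - (-c * Z * l^(-c-1)) / (1 + vv c Z l))
      = c * (VV c Z l - th Y l * UU c X Y l) := by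
  have hu1 : (0:ℝ) < 1 + uu c X Y l := by have := upos (c:=c) (l:=l) hX hYl; linarith
  have hv1 : (0:ℝ) < 1 + vv c Z l := by have := vpos (c:=c) (l:=l) hZ hl; linarith
  rw [rpow_shift hYl c, rpow_shift hl c]
  unfold VV th UU uu vv at *
  field_simp
  ring

lemma hasDerivAt_FF (hX : 0 < X) (hZ : 0 < Z) (hl : 0 < l) (hYl : 0 < 1 + Y*l) :
    HasDerivAt (fun l => FF c X Y Z l) (HH c X Y Z l) l := by
  have h := (hasDerivAt_id l).mul (hasDerivAt_f (c:=c) hX hZ hl hYl)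
  have : HH c X Y Z l = 1 * ff c X Y Z l +
      l * ((-c * X * Y * (1+Y*l)^(-c-1)) / (1 + uu c X Y l)
        - (-c * Z * l^(-c-1)) / (1 + vv c Z l)) := by
    rw [lDf_eq hX hZ hl hYl]; unfold HH; ring
  rw [this]
  exact h

lemma continuousAt_HH (hX : 0 < X) (hZ : 0 < Z) (hl : 0 < l) (hYl : 0 < 1 + Y*l) :
    ContinuousAt (fun l => HH c X Y Z l) l := by
  have hu1 : (0:ℝ) < 1 + uu c X Y l := by have := upos (c:=c) (l:=l) hX hYl; linarith
  have hv1 : (0:ℝ) < 1 + vv c Z l := by have := vpos (c:=c) (l:=l) hZ hl; linarith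
  have hcu : ContinuousAt (fun l => uu c X Y l) l := (hasDerivAt_u (c:=c) (X:=X) hYl).continuousAt
  have hcv : ContinuousAt (fun l => vv c Z l) l := (hasDerivAt_v (c:=c) (Z:=Z) hl).continuousAt
  have hcf : ContinuousAt (fun l => ff c X Y Z l) l := (hasDerivAt_f (c:=c) hX hZ hl hYl).continuousAt
  have hcU : ContinuousAt (fun l => UU c X Y l) l := by
    unfold UU; exact hcu.div (continuousAt_const.add hcu) hu1.ne'
  have hcV : ContinuousAt (fun l => VV c Z l) l := by
    unfold VV; exact hcv.div (continuousAt_const.add hcv) hv1.ne'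
  have hcth : ContinuousAt (fun l => th Y l) l := by
    unfold th
    exact (continuousAt_const.mul continuousAt_id).div
      (continuousAt_const.add (continuousAt_const.mul continuousAt_id)) hYl.ne'
  unfold HH
  exact hcf.add (continuousAt_const.mul (hcV.sub (hcth.mul hcU)))

lemma uv_lt_iff (hc : 0 < c) (hX : 0 < X) (hY : 0 < Y) (hZ : 0 < Z) (hl : 0 < l) :
    (vv c Z l < uu c X Y l ↔ 1/l + Y < (X/Z)^(1/c)) := by
  have hYl : (0:ℝ) < 1 + Y*l := by positivity
  have hsplit : 1 + Y*l = (1/l + Y) * l := by field_simp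
  have hq : (0:ℝ) < 1/l + Y := by positivity
  have hXZ : (0:ℝ) < X/Z := by positivity
  have h1 : vv c Z l < uu c X Y l ↔ (1/l + Y)^c < X/Z := by
    unfold uu vv
    rw [Real.rpow_neg hYl.le, Real.rpow_neg hl.le, ← div_eq_mul_inv, ← div_eq_mul_inv,
      div_lt_div_iff₀ (by positivity) (by positivity), hsplit,
      Real.mul_rpow hq.le hl.le,
      show Z * ((1/l+Y)^c * l^c) = ((1/l+Y)^c * Z) * l^c from by ring,
      mul_lt_mul_iff_of_pos_right (Real.rpow_pos_of_pos hl c), lt_div_iff₀ hZ]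
  rw [h1, show (X/Z)^(1/c) = (X/Z)^(c⁻¹) from by rw [one_div],
    ← Real.lt_rpow_inv_iff_of_pos hq.le hXZ.le hc]

lemma uv_lt_iff' (hc : 0 < c) (hX : 0 < X) (hY : 0 < Y) (hZ : 0 < Z) (hl : 0 < l) :
    (uu c X Y l < vv c Z l ↔ (X/Z)^(1/c) < 1/l + Y) := by
  have hYl : (0:ℝ) < 1 + Y*l := by positivity
  have hsplit : 1 + Y*l = (1/l + Y) * l := by field_simp
  have hq : (0:ℝ) < 1/l + Y := by positivity
  have hXZ : (0:ℝ) < X/Z := by positivity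
  have h1 : uu c X Y l < vv c Z l ↔ X/Z < (1/l + Y)^c := by
    unfold uu vv
    rw [Real.rpow_neg hYl.le, Real.rpow_neg hl.le, ← div_eq_mul_inv, ← div_eq_mul_inv,
      div_lt_div_iff₀ (by positivity) (by positivity), hsplit,
      Real.mul_rpow hq.le hl.le,
      show Z * ((1/l+Y)^c * l^c) = ((1/l+Y)^c * Z) * l^c from by ring,
      mul_lt_mul_iff_of_pos_right (Real.rpow_pos_of_pos hl c), div_lt_iff₀ hZ]
  rw [h1, show (X/Z)^(1/c) = (X/Z)^(c⁻¹) from by rw [one_div],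
    ← Real.rpow_inv_lt_iff_of_pos hXZ.le hq.le hc]

lemma uv_eq_iff (hc : 0 < c) (hX : 0 < X) (hY : 0 < Y) (hZ : 0 < Z) (hl : 0 < l) :
    (uu c X Y l = vv c Z l ↔ 1/l + Y = (X/Z)^(1/c)) := by
  constructor
  · intro h
    have h2 : ¬ (1/l + Y < (X/Z)^(1/c)) := fun hh =>
      absurd ((uv_lt_iff hc hX hY hZ hl).2 hh) (by rw [h]; exact lt_irrefl _)
    have h3 : ¬ ((X/Z)^(1/c) < 1/l + Y) := fun hh =>
      absurd ((uv_lt_iff' hc hX hY hZ hl).2 hh) (by rw [h]; exact lt_irrefl _)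
    linarith [not_lt.1 h2, not_lt.1 h3]
  · intro h
    have h2 : ¬ (vv c Z l < uu c X Y l) :=
      (uv_lt_iff hc hX hY hZ hl).not.2 (by rw [h]; exact lt_irrefl _)
    have h3 : ¬ (uu c X Y l < vv c Z l) :=
      (uv_lt_iff' hc hX hY hZ hl).not.2 (by rw [h]; exact lt_irrefl _)
    linarith [not_lt.1 h2, not_lt.1 h3]

lemma W_pos (hc : 0 < c) (hX : 0 < X) (hY : 0 < Y) (hZ : 0 < Z)
    (hcond : Z * Y^c < X) : 0 < (X/Z)^(1/c) - Y := by
  have hXZ : (0:ℝ) < X/Z := by positivity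
  have h : Y^c < X/Z := (lt_div_iff₀ hZ).2 (by linarith [mul_comm Z (Y^c)])
  have h2 : Y < (X/Z)^(c⁻¹) := (Real.lt_rpow_inv_iff_of_pos hY.le hXZ.le hc).2 h
  rw [one_div]; linarith

lemma u_gt_v (hc : 0 < c) (hX : 0 < X) (hY : 0 < Y) (hZ : 0 < Z)
    (hcond : Z * Y^c < X) {lL : ℝ} (hlL : lL = 1/((X/Z)^(1/c) - Y)) {l : ℝ}
    (hl : lL < l) : vv c Z l < uu c X Y l := by
  have hW := W_pos hc hX hY hZ hcond
  have hlLpos : 0 < lL := by rw [hlL]; positivity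
  have hlpos : 0 < l := hlLpos.trans hl
  apply (uv_lt_iff hc hX hY hZ hlpos).2
  have hW' : 1/lL = (X/Z)^(1/c) - Y := by rw [hlL, one_div_one_div]
  have h1 : 1/l < (X/Z)^(1/c) - Y := by
    rw [← hW']
    exact one_div_lt_one_div_of_lt hlLpos hl
  linarith

lemma lL_pos (hc : 0 < c) (hX : 0 < X) (hY : 0 < Y) (hZ : 0 < Z)
    (hcond : Z * Y^c < X) {lL : ℝ} (hlL : lL = 1/((X/Z)^(1/c) - Y)) : 0 < lL := by
  have hW := W_pos hc hX hY hZ hcond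
  rw [hlL]; positivity

lemma u_eq_v_at (hc : 0 < c) (hX : 0 < X) (hY : 0 < Y) (hZ : 0 < Z)
    (hcond : Z * Y^c < X) {lL : ℝ} (hlL : lL = 1/((X/Z)^(1/c) - Y)) :
    uu c X Y lL = vv c Z lL := by
  have hW := W_pos hc hX hY hZ hcond
  have hlLpos : 0 < lL := lL_pos hc hX hY hZ hcond hlL
  apply (uv_eq_iff hc hX hY hZ hlLpos).2
  rw [hlL, one_div_one_div]; ring

lemma ff_pos (hX : 0 < X) (hZ : 0 < Z) (hl : 0 < l) (hYl : 0 < 1 + Y*l)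
    (huv : vv c Z l < uu c X Y l) : 0 < ff c X Y Z l := by
  have hv := vpos (c:=c) (l:=l) hZ hl
  unfold ff
  have h0 : (0:ℝ) < 1 + vv c Z l := by linarith
  have h1 : 1 + vv c Z l < 1 + uu c X Y l := by linarith
  have := Real.log_lt_log h0 h1
  linarith

lemma UV_facts (hX : 0 < X) (hZ : 0 < Z) (hl : 0 < l) (hYl : 0 < 1 + Y*l)
    (huv : vv c Z l < uu c X Y l) :
    0 < VV c Z l ∧ VV c Z l < UU c X Y l ∧ UU c X Y l < 1 := by
  have hv := vpos (c:=c) (l:=l) hZ hl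
  have hu := upos (c:=c) (l:=l) hX hYl
  unfold UU VV
  refine ⟨by positivity, ?_, ?_⟩
  · rw [div_lt_div_iff₀ (by linarith) (by linarith)]; nlinarith
  · rw [div_lt_one (by linarith)]; linarith

lemma th_mem (hY : 0 < Y) (hl : 0 < l) : 0 < th Y l ∧ th Y l < 1 := by
  have hYl : (0:ℝ) < 1 + Y*l := by positivity
  unfold th
  constructor
  · positivity
  · rw [div_lt_one hYl]; linarith

lemma ff_bound (hX : 0 < X) (hZ : 0 < Z) (hl : 0 < l) (hYl : 0 < 1 + Y*l) :
    ff c X Y Z l * (1 - UU c X Y l) ≤ UU c X Y l - VV c Z l := by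
  have hv := vpos (c:=c) (l:=l) hZ hl
  have hu := upos (c:=c) (l:=l) hX hYl
  have h1 : ff c X Y Z l ≤ (uu c X Y l - vv c Z l)/(1 + vv c Z l) := by
    have h2 : ff c X Y Z l = Real.log ((1 + uu c X Y l)/(1 + vv c Z l)) := by
      unfold ff; rw [Real.log_div (by linarith) (by linarith)]
    rw [h2]
    have h3 := Real.log_le_sub_one_of_pos
      (show (0:ℝ) < (1 + uu c X Y l)/(1 + vv c Z l) by positivity)
    have h4 : (1 + uu c X Y l)/(1 + vv c Z l) - 1 = (uu c X Y l - vv c Z l)/(1 + vv c Z l) := by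
      field_simp
      ring
    linarith
  have h5 : (0:ℝ) < 1 - UU c X Y l := by
    have : UU c X Y l < 1 := by unfold UU; rw [div_lt_one (by linarith)]; linarith
    linarith
  have h6 : (uu c X Y l - vv c Z l)/(1 + vv c Z l) * (1 - UU c X Y l)
      = UU c X Y l - VV c Z l := by
    unfold UU VV; field_simp; ring
  calc ff c X Y Z l * (1 - UU c X Y l)
      ≤ (uu c X Y l - vv c Z l)/(1 + vv c Z l) * (1 - UU c X Y l) :=
        mul_le_mul_of_nonneg_right h1 h5.le
    _ = UU c X Y l - VV c Z l := h6

noncomputable def RR (c X Y Z l : ℝ) : ℝ :=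
  c * (th Y l * UU c X Y l - VV c Z l) / ff c X Y Z l

lemma hasDerivAt_th (hYl : 0 < 1 + Y*l) :
    HasDerivAt (fun l => th Y l) (Y/(1+Y*l)^2) l := by
  have h1 : HasDerivAt (fun l : ℝ => Y*l) Y l := by
    simpa using (hasDerivAt_id l).const_mul Y
  have h2 : HasDerivAt (fun l : ℝ => 1 + Y*l) Y l := h1.const_add 1
  have := h1.div h2 hYl.ne'
  refine this.congr_deriv ?_
  ring

lemma hasDerivAt_UU (hX : 0 < X) (hYl : 0 < 1 + Y*l) :
    HasDerivAt (fun l => UU c X Y l)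
      ((-c * X * Y * (1+Y*l)^(-c-1)) / (1 + uu c X Y l)^2) l := by
  have hu := upos (c:=c) (l:=l) hX hYl
  have h1 := hasDerivAt_u (c:=c) (X:=X) hYl
  have h2 := h1.const_add 1
  have hne : (1 + uu c X Y l) ≠ 0 := by linarith
  have := h1.div h2 hne
  unfold UU
  refine this.congr_deriv ?_
  ring

lemma hasDerivAt_VV (hZ : 0 < Z) (hl : 0 < l) :
    HasDerivAt (fun l => VV c Z l)
      ((-c * Z * l^(-c-1)) / (1 + vv c Z l)^2) l := by
  have hv := vpos (c:=c) (l:=l) hZ hl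
  have h1 := hasDerivAt_v (c:=c) (Z:=Z) hl
  have h2 := h1.const_add 1
  have hne : (1 + vv c Z l) ≠ 0 := by linarith
  have := h1.div h2 hne
  unfold VV
  refine this.congr_deriv ?_
  ring

lemma RR_deriv_pos (hc : 0 < c) (hX : 0 < X) (hY : 0 < Y) (hZ : 0 < Z)
    (hl : 0 < l) (huv : vv c Z l < uu c X Y l) :
    ∃ d : ℝ, HasDerivAt (fun l => RR c X Y Z l) d l ∧ 0 < d := by
  have hYl : (0:ℝ) < 1 + Y*l := by positivity
  have hu := upos (c:=c) (l:=l) hX hYl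
  have hv := vpos (c:=c) (l:=l) hZ hl
  have hff := ff_pos (c:=c) hX hZ hl hYl huv
  have hnum : HasDerivAt (fun l => c * (th Y l * UU c X Y l - VV c Z l))
      (c * ((Y/(1+Y*l)^2) * UU c X Y l
        + th Y l * ((-c * X * Y * (1+Y*l)^(-c-1)) / (1 + uu c X Y l)^2)
        - (-c * Z * l^(-c-1)) / (1 + vv c Z l)^2)) l :=
    (((hasDerivAt_th hYl).mul (hasDerivAt_UU hX hYl)).sub (hasDerivAt_VV hZ hl)).const_mul c
  have hDf := hasDerivAt_f (c:=c) hX hZ hl hYl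
  have hR := hnum.div hDf hff.ne'
  refine ⟨_, hR, ?_⟩
  obtain ⟨hV0, hVU, hU1⟩ := UV_facts (c:=c) hX hZ hl hYl huv
  obtain ⟨hT0, hT1⟩ := th_mem (l:=l) hY hl
  have hfb := ff_bound (c:=c) (X:=X) (Y:=Y) (Z:=Z) hX hZ hl hYl
  have e1 : l * (Y/(1+Y*l)^2) = th Y l * (1 - th Y l) := by
    unfold th; field_simp; ring
  have e2 : l * ((-c * X * Y * (1+Y*l)^(-c-1)) / (1 + uu c X Y l)^2)
      = -c * th Y l * (UU c X Y l * (1 - UU c X Y l)) := by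
    have hu1 : (0:ℝ) < 1 + uu c X Y l := by linarith
    unfold th UU
    rw [rpow_shift hYl]
    have hu2 : (1 + uu c X Y l) ≠ 0 := by linarith
    unfold uu at *
    field_simp
    ring
  have e3 : l * ((-c * Z * l^(-c-1)) / (1 + vv c Z l)^2)
      = -c * (VV c Z l * (1 - VV c Z l)) := by
    have hv1 : (0:ℝ) < 1 + vv c Z l := by linarith
    unfold VV
    rw [rpow_shift hl]
    have hv2 : (1 + vv c Z l) ≠ 0 := by linarith
    unfold vv at *
    field_simp
    ring
  have e4 : l * ((-c * X * Y * (1+Y*l)^(-c-1)) / (1 + uu c X Y l)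
      - (-c * Z * l^(-c-1)) / (1 + vv c Z l))
      = c * (VV c Z l - th Y l * UU c X Y l) := lDf_eq hX hZ hl hYl
  set T := th Y l with hT
  set U := UU c X Y l with hU
  set V := VV c Z l with hV
  set f := ff c X Y Z l with hf
  have hkey := key_poly U V T f hV0 hVU hU1 hT0.le hT1.le hff hfb
  have hlN : l * ((c * ((Y/(1+Y*l)^2) * U
        + T * ((-c * X * Y * (1+Y*l)^(-c-1)) / (1 + uu c X Y l)^2)
        - (-c * Z * l^(-c-1)) / (1 + vv c Z l)^2)) * f
      - c * (T * U - V) * ((-c * X * Y * (1+Y*l)^(-c-1)) / (1 + uu c X Y l)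
        - (-c * Z * l^(-c-1)) / (1 + vv c Z l)))
      = c * (T*(1-T)*U*f)
        + c^2 * ((V - T*U)^2 - f*(T^2*U*(1-U) - V*(1-V))) := by
    linear_combination (c*f*U)*e1 + (c*f*T)*e2 - (c*f)*e3 - (c*(T*U-V))*e4
  have hterm1 : 0 < c * (T*(1-T)*U*f) := by
    have hU0 : 0 < U := hV0.trans hVU
    have h1T : 0 < 1 - T := by linarith
    exact mul_pos hc (mul_pos (mul_pos (mul_pos hT0 h1T) hU0) hff)
  have hN : 0 < ((c * ((Y/(1+Y*l)^2) * U
        + T * ((-c * X * Y * (1+Y*l)^(-c-1)) / (1 + uu c X Y l)^2)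
        - (-c * Z * l^(-c-1)) / (1 + vv c Z l)^2)) * f
      - c * (T * U - V) * ((-c * X * Y * (1+Y*l)^(-c-1)) / (1 + uu c X Y l)
        - (-c * Z * l^(-c-1)) / (1 + vv c Z l))) := by
    have h2 := mul_nonneg (sq_nonneg c) hkey
    nlinarith [hlN, hterm1, hl]
  exact div_pos hN (pow_pos hff 2)

lemma RR_strictMono (hc : 0 < c) (hX : 0 < X) (hY : 0 < Y) (hZ : 0 < Z)
    (hcond : Z * Y^c < X) {lL : ℝ} (hlL : lL = 1/((X/Z)^(1/c) - Y)) :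
    StrictMonoOn (fun l => RR c X Y Z l) (Set.Ioi lL) := by
  have hlL0 := lL_pos hc hX hY hZ hcond hlL
  apply strictMonoOn_of_deriv_pos (convex_Ioi lL)
  · intro x hx
    obtain ⟨d, hd, _⟩ := RR_deriv_pos hc hX hY hZ (hlL0.trans hx)
      (u_gt_v hc hX hY hZ hcond hlL hx)
    exact hd.continuousAt.continuousWithinAt
  · intro x hx
    rw [interior_Ioi] at hx
    obtain ⟨d, hd, hdpos⟩ := RR_deriv_pos hc hX hY hZ (hlL0.trans hx)
      (u_gt_v hc hX hY hZ hcond hlL hx)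
    rw [hd.deriv]
    exact hdpos

lemma HH_eq_ff_mul (hff : ff c X Y Z l ≠ 0) :
    HH c X Y Z l = ff c X Y Z l * (1 - RR c X Y Z l) := by
  unfold HH RR
  field_simp
  ring

lemma HH_lL_pos (hc : 0 < c) (hX : 0 < X) (hY : 0 < Y) (hZ : 0 < Z)
    (hcond : Z * Y^c < X) {lL : ℝ} (hlL : lL = 1/((X/Z)^(1/c) - Y)) :
    0 < HH c X Y Z lL := by
  have hlL0 := lL_pos hc hX hY hZ hcond hlL
  have heq := u_eq_v_at hc hX hY hZ hcond hlL
  have hYl : (0:ℝ) < 1 + Y*lL := by positivity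
  have hv := vpos (c:=c) (l:=lL) hZ hlL0
  have hff0 : ff c X Y Z lL = 0 := by unfold ff; rw [heq]; ring
  have hUV : UU c X Y lL = VV c Z lL := by unfold UU VV; rw [heq]
  obtain ⟨hT0, hT1⟩ := th_mem (l:=lL) hY hlL0
  have hV0 : 0 < VV c Z lL := by unfold VV; positivity
  have : HH c X Y Z lL = c * (VV c Z lL * (1 - th Y lL)) := by
    unfold HH; rw [hff0, hUV]; ring
  rw [this]
  have h1T : 0 < 1 - th Y lL := by linarith
  positivity

lemma FF_le (hc1 : 1 < c) (hX : 0 < X) (hY : 0 < Y) (hZ : 0 < Z) (hl : 0 < l) :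
    FF c X Y Z l ≤ X * Y^(-c) * l^(1-c) := by
  have hc : (0:ℝ) < c := by linarith
  have hYl : (0:ℝ) < 1 + Y*l := by positivity
  have hYl2 : (0:ℝ) < Y*l := by positivity
  have hu := upos (c:=c) (l:=l) hX hYl
  have hv := vpos (c:=c) (l:=l) hZ hl
  have h1 : ff c X Y Z l ≤ uu c X Y l := by
    unfold ff
    have h2 : Real.log (1 + uu c X Y l) ≤ uu c X Y l := by
      have := Real.log_le_sub_one_of_pos (show (0:ℝ) < 1 + uu c X Y l by linarith)
      linarith
    have h3 : 0 ≤ Real.log (1 + vv c Z l) := Real.log_nonneg (by linarith)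
    linarith
  have h4 : uu c X Y l ≤ X * (Y*l)^(-c) := by
    unfold uu
    apply mul_le_mul_of_nonneg_left _ hX.le
    exact Real.rpow_le_rpow_of_nonpos hYl2 (by linarith) (by linarith)
  have h5 : FF c X Y Z l ≤ l * (X * (Y*l)^(-c)) := by
    unfold FF
    calc l * ff c X Y Z l ≤ l * uu c X Y l := by
          exact mul_le_mul_of_nonneg_left h1 hl.le
      _ ≤ l * (X * (Y*l)^(-c)) := mul_le_mul_of_nonneg_left h4 hl.le
  calc FF c X Y Z l ≤ l * (X * (Y*l)^(-c)) := h5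
    _ = X * Y^(-c) * l^(1-c) := by
        rw [Real.mul_rpow hY.le hl.le,
          show (1:ℝ)-c = -c+1 from by ring, Real.rpow_add_one hl.ne']
        ring

lemma exists_b (hc1 : 1 < c) (hX : 0 < X) (hY : 0 < Y) (hZ : 0 < Z)
    (hcond : Z * Y^c < X) {lL : ℝ} (hlL : lL = 1/((X/Z)^(1/c) - Y)) :
    ∃ b : ℝ, lL < b ∧ HH c X Y Z b < 0 := by
  have hc : (0:ℝ) < c := by linarith
  have hlL0 := lL_pos hc hX hY hZ hcond hlL
  by_contra hcon
  push_neg at hcon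
  set a₀ := lL + 1 with ha₀
  have ha₀lL : lL < a₀ := by linarith
  have ha₀0 : 0 < a₀ := by linarith
  have hmono : MonotoneOn (fun l => FF c X Y Z l) (Set.Ici a₀) := by
    apply monotoneOn_of_deriv_nonneg (convex_Ici a₀)
    · intro x hx
      have hx0 : 0 < x := lt_of_lt_of_le ha₀0 hx
      exact (hasDerivAt_FF (c:=c) hX hZ hx0 (by positivity)).continuousAt.continuousWithinAt
    · intro x hx
      rw [interior_Ici] at hx
      have hx0 : 0 < x := lt_trans ha₀0 hx
      exact ((hasDerivAt_FF (c:=c) (Y:=Y) hX hZ hx0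
        (by positivity)).differentiableAt.differentiableWithinAt)
    · intro x hx
      rw [interior_Ici] at hx
      have hx0 : 0 < x := lt_trans ha₀0 hx
      rw [(hasDerivAt_FF (c:=c) (Y:=Y) hX hZ hx0 (by positivity)).deriv]
      exact hcon x (by linarith [(Set.mem_Ioi.1 hx).le, ha₀lL] : lL < x)
  have hFFa₀ : 0 < FF c X Y Z a₀ := by
    have huv := u_gt_v hc hX hY hZ hcond hlL ha₀lL
    have hff := ff_pos (c:=c) hX hZ ha₀0 (by positivity) huv
    exact mul_pos ha₀0 hff
  have htend : Filter.Tendsto (fun l : ℝ => X * Y^(-c) * l^(1-c)) Filter.atTop (nhds 0) := by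
    have h := tendsto_rpow_neg_atTop (show (0:ℝ) < c - 1 by linarith)
    have h2 := h.const_mul (X * Y^(-c))
    rw [mul_zero] at h2
    convert h2 using 2 with l
    ring_nf
  have hev := (htend.eventually_lt_const hFFa₀).and (Filter.eventually_ge_atTop a₀)
  obtain ⟨t, ht1, ht2⟩ := hev.exists
  have := hmono (Set.self_mem_Ici) ht2 ht2
  have hb := FF_le (c:=c) (Z:=Z) hc1 hX hY hZ (lt_of_lt_of_le ha₀0 ht2)
  simp only at this
  linarith

theorem main_aux (hc1 : 1 < c) (hX : 0 < X) (hY : 0 < Y) (hZ : 0 < Z)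
    (hcond : Z * Y^c < X) {lL : ℝ} (hlL : lL = 1/((X/Z)^(1/c) - Y)) :
    ∃ ls : ℝ, lL < ls ∧ HH c X Y Z ls = 0 ∧
      (∀ l, lL < l → l < ls → 0 < HH c X Y Z l) ∧
      (∀ l, ls < l → HH c X Y Z l < 0) := by
  have hc : (0:ℝ) < c := by linarith
  have hlL0 := lL_pos hc hX hY hZ hcond hlL
  obtain ⟨b, hb, hHb⟩ := exists_b hc1 hX hY hZ hcond hlL
  have hcontlL : ContinuousAt (fun l => HH c X Y Z l) lL :=
    continuousAt_HH hX hZ hlL0 (by positivity)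
  have hev : ∀ᶠ x in nhds lL, 0 < HH c X Y Z x :=
    hcontlL.eventually_const_lt (HH_lL_pos hc hX hY hZ hcond hlL)
  have hev2 : ∀ᶠ x in nhdsWithin lL (Set.Ioi lL),
      (0 < HH c X Y Z x ∧ x < b) ∧ lL < x :=
    (((hev.filter_mono nhdsWithin_le_nhds).and
      ((eventually_lt_nhds hb).filter_mono nhdsWithin_le_nhds))).and
      eventually_mem_nhdsWithin
  obtain ⟨a, ⟨hHa, hab⟩, hlLa⟩ := hev2.exists
  have ha0 : 0 < a := hlL0.trans hlLa
  have hcont : ContinuousOn (fun l => HH c X Y Z l) (Set.Icc a b) := by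
    intro x hx
    have hx0 : 0 < x := lt_of_lt_of_le ha0 hx.1
    exact (continuousAt_HH hX hZ hx0 (by positivity)).continuousWithinAt
  have h0mem : (0:ℝ) ∈ Set.Ioo (HH c X Y Z b) (HH c X Y Z a) := ⟨hHb, hHa⟩
  obtain ⟨ls, hlsmem, hHls⟩ := intermediate_value_Ioo' hab.le hcont h0mem
  have hlLls : lL < ls := hlLa.trans hlsmem.1
  have hRmono := RR_strictMono hc hX hY hZ hcond hlL
  have hffpos : ∀ l, lL < l → 0 < ff c X Y Z l := fun l hl =>
    ff_pos hX hZ (hlL0.trans hl) (by have := hlL0.trans hl; positivity)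
      (u_gt_v hc hX hY hZ hcond hlL hl)
  simp only at hHls
  have hRls : RR c X Y Z ls = 1 := by
    have h1 := HH_eq_ff_mul (c:=c) (X:=X) (Y:=Y) (Z:=Z) (l:=ls) (hffpos ls hlLls).ne'
    rw [hHls] at h1
    have h2 := (hffpos ls hlLls).ne'
    rcases mul_eq_zero.1 h1.symm with h | h
    · exact absurd h h2
    · linarith
  refine ⟨ls, hlLls, hHls, ?_, ?_⟩
  · intro l hl1 hl2
    have hR := hRmono (Set.mem_Ioi.2 hl1) (Set.mem_Ioi.2 hlLls) hl2
    simp only [hRls] at hR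
    rw [HH_eq_ff_mul (hffpos l hl1).ne']
    exact mul_pos (hffpos l hl1) (by linarith)
  · intro l hl
    have hl1 : lL < l := hlLls.trans hl
    have hR := hRmono (Set.mem_Ioi.2 hlLls) (Set.mem_Ioi.2 hl1) hl
    simp only [hRls] at hR
    rw [HH_eq_ff_mul (hffpos l hl1).ne']
    exact mul_neg_of_pos_of_neg (hffpos l hl1) (by linarith)

end



/-- Theorem 4 of the paper (quasi-concavity of the secrecy throughput): with
`f₁(λ) = 1 + X(1+Yλ)^(-α/2)`, `f₂(λ) = 1 + Zλ^(-α/2)`, `F(λ) = λ ln(f₁(λ)/f₂(λ))`,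
and `λ^L = 1/((X/Z)^(2/α) - Y)` under `X > Z Y^(α/2)`: there is a unique
`λ* ∈ (λ^L, ∞)` with `F'(λ*) = 0`; moreover `F' > 0` on `(λ^L, λ*)`, `F' < 0` on
`(λ*, ∞)`, `F` is strictly increasing on `(λ^L, λ*]`, strictly decreasing on
`[λ*, ∞)`, and attains its maximum over `(λ^L, ∞)` uniquely at `λ*`. -/
theorem F_quasiconcave_unique_maximizer (α X Y Z : ℝ) (hα : 2 < α)
    (hX : 0 < X) (hY : 0 < Y) (hZ : 0 < Z)
    (hcond : X > Z * Y ^ (α / 2))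
    (lL : ℝ) (hlL : lL = 1 / ((X / Z) ^ (2 / α) - Y))
    (f₁ f₂ F : ℝ → ℝ)
    (hf₁ : ∀ l : ℝ, f₁ l = 1 + X * (1 + Y * l) ^ (-(α / 2)))
    (hf₂ : ∀ l : ℝ, f₂ l = 1 + Z * l ^ (-(α / 2)))
    (hF : ∀ l : ℝ, F l = l * Real.log (f₁ l / f₂ l)) :
    ∃ ls : ℝ, lL < ls ∧ deriv F ls = 0 ∧
      (∀ l : ℝ, l ∈ Set.Ioo lL ls → 0 < deriv F l) ∧
      (∀ l : ℝ, l ∈ Set.Ioi ls → deriv F l < 0) ∧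
      StrictMonoOn F (Set.Ioc lL ls) ∧
      StrictAntiOn F (Set.Ici ls) ∧
      (∀ l : ℝ, l ∈ Set.Ioi lL → l ≠ ls → F l < F ls) ∧
      (∀ l : ℝ, lL < l → deriv F l = 0 → l = ls) := by
  set c := α / 2 with hcdef
  have hc1 : 1 < c := by rw [hcdef]; linarith
  have hc : (0:ℝ) < c := by linarith
  have hcond' : Z * Y ^ c < X := hcond
  have hlL' : lL = 1 / ((X / Z) ^ (1/c) - Y) := by
    rw [hlL, hcdef, one_div_div]
  have hlL0 := lL_pos hc hX hY hZ hcond' hlL'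
  -- F agrees with FF on Ioi 0
  have hFeq : ∀ l ∈ Set.Ioi (0:ℝ), F l = FF c X Y Z l := by
    intro l hl
    have hl0 : (0:ℝ) < l := hl
    have hYl : (0:ℝ) < 1 + Y * l := by positivity
    have hu := upos (c:=c) (l:=l) hX hYl
    have hv := vpos (c:=c) (l:=l) hZ hl0
    rw [hF, hf₁, hf₂]
    unfold FF ff
    congr 1
    rw [show (1:ℝ) + X * (1 + Y * l) ^ (-(c)) = 1 + uu c X Y l from rfl,
      show (1:ℝ) + Z * l ^ (-(c)) = 1 + vv c Z l from rfl]
    rw [Real.log_div (by linarith) (by linarith)]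
  have hFhas : ∀ l : ℝ, 0 < l → HasDerivAt F (HH c X Y Z l) l := by
    intro l hl
    have hYl : (0:ℝ) < 1 + Y * l := by positivity
    have hFF := hasDerivAt_FF (c:=c) (Y:=Y) hX hZ hl hYl
    have hev : F =ᶠ[nhds l] fun l => FF c X Y Z l :=
      Filter.eventuallyEq_of_mem (isOpen_Ioi.mem_nhds hl) hFeq
    exact hFF.congr_of_eventuallyEq hev
  have hFderiv : ∀ l : ℝ, 0 < l → deriv F l = HH c X Y Z l := fun l hl =>
    (hFhas l hl).deriv
  obtain ⟨ls, hlLls, hHls, hpos, hneg⟩ := main_aux hc1 hX hY hZ hcond' hlL'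
  have hls0 : 0 < ls := hlL0.trans hlLls
  have hmono : StrictMonoOn F (Set.Ioc lL ls) := by
    apply strictMonoOn_of_deriv_pos (convex_Ioc lL ls)
    · intro x hx
      exact (hFhas x (hlL0.trans hx.1)).continuousAt.continuousWithinAt
    · intro x hx
      rw [interior_Ioc] at hx
      rw [hFderiv x (hlL0.trans hx.1)]
      exact hpos x hx.1 hx.2
  have hanti : StrictAntiOn F (Set.Ici ls) := by
    apply strictAntiOn_of_deriv_neg (convex_Ici ls)
    · intro x hx
      exact (hFhas x (lt_of_lt_of_le hls0 hx)).continuousAt.continuousWithinAt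
    · intro x hx
      rw [interior_Ici] at hx
      rw [hFderiv x (hls0.trans hx)]
      exact hneg x hx
  refine ⟨ls, hlLls, ?_, ?_, ?_, hmono, hanti, ?_, ?_⟩
  · rw [hFderiv ls hls0]; exact hHls
  · intro l hl
    rw [hFderiv l (hlL0.trans hl.1)]
    exact hpos l hl.1 hl.2
  · intro l hl
    rw [hFderiv l (hls0.trans hl)]
    exact hneg l hl
  · intro l hl hne
    rcases lt_or_gt_of_ne hne with h | h
    · exact hmono (Set.mem_Ioc.2 ⟨hl, h.le⟩) (Set.mem_Ioc.2 ⟨hlLls, le_refl ls⟩) h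
    · exact hanti (Set.self_mem_Ici) (Set.mem_Ici.2 h.le) h
  · intro l hl hderiv
    by_contra hne
    rcases lt_or_gt_of_ne hne with h | h
    · have := hpos l hl h
      rw [hFderiv l (hlL0.trans hl)] at hderiv
      linarith
    · have := hneg l h
      rw [hFderiv l (hls0.trans h)] at hderiv
      linarith
end
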